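/- arXiv:1304.1015 — 3 statements merged into one kernel-verified Lean document; each statement's English description precedes it below -/
import Mathlib

section
/- Let 𝔊 be a homothecy invariant collection of open rectangles in ℝⁿ, let μ be a nonzero locally finite nonnegative Borel measure doubling with respect to 𝔊 with constant Δ_μ, and fix β ∈ (0,1). Suppose E ⊆ ℝⁿ is a Borel set, R ∈ 𝔊, μ(R) > 0, and μ(E ∩ R)/μ(R) = α for some α ∈ (0,β). Then there exists a nonnegative integer N with β^{−(N+1)} ≥ Δ_μ such that μ(R ∩ H_β^{N+2}(E)) ≥ (1/β)·μ(E ∩ R). -/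
open MeasureTheory Set Filter
open scoped ENNReal Topology Pointwise

noncomputable section

/-- The maximal operator `M_{𝔅,μ}` associated to a measure `μ` and a collection `𝔅`
of subsets of `ℝⁿ`, applied to `f` at the point `x` (valued in `ℝ≥0∞`; it equals `0`
outside the union of `𝔅`). -/
noncomputable def maxOp {n : ℕ} (μ : Measure (EuclideanSpace ℝ (Fin n)))
    (𝔅 : Set (Set (EuclideanSpace ℝ (Fin n))))
    (f : EuclideanSpace ℝ (Fin n) → ℝ) (x : EuclideanSpace ℝ (Fin n)) : ℝ≥0∞ :=
  ⨆ (B : Set (EuclideanSpace ℝ (Fin n))) (_ : B ∈ 𝔅) (_ : x ∈ B) (_ : 0 < μ B),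
    (∫⁻ y in B, ENNReal.ofReal |f y| ∂μ) / μ B

/-- A collection of sets is homothecy invariant if it is closed under translations and
positive dilations. -/
def HomothecyInvariant {n : ℕ} (𝔅 : Set (Set (EuclideanSpace ℝ (Fin n)))) : Prop :=
  ∀ B ∈ 𝔅, (∀ y : EuclideanSpace ℝ (Fin n), y +ᵥ B ∈ 𝔅) ∧ (∀ s : ℝ, 0 < s → s • B ∈ 𝔅)

/-- `μ` is doubling with respect to the collection `𝔅`, with constant `Δ`: whenever
`B ∈ 𝔅` and a translate of the dilate `2·B` contains `B`, its measure is at most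
`Δ·μ(B)`. -/
def DoublingWrt {n : ℕ} (μ : Measure (EuclideanSpace ℝ (Fin n)))
    (𝔅 : Set (Set (EuclideanSpace ℝ (Fin n)))) (Δ : ℝ) : Prop :=
  ∀ B ∈ 𝔅, ∀ σ : EuclideanSpace ℝ (Fin n),
    B ⊆ σ +ᵥ (2 : ℝ) • B → μ (σ +ᵥ (2 : ℝ) • B) ≤ ENNReal.ofReal Δ * μ B

/-- A member of a basis of convex sets: nonempty, bounded, open and convex. -/
def IsConvexBasisSet {n : ℕ} (B : Set (EuclideanSpace ℝ (Fin n))) : Prop :=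
  B.Nonempty ∧ Bornology.IsBounded B ∧ IsOpen B ∧ Convex ℝ B

/-- An open axis-parallel rectangle in `ℝⁿ`. -/
def IsAxisRect {n : ℕ} (R : Set (EuclideanSpace ℝ (Fin n))) : Prop :=
  ∃ a b : Fin n → ℝ, (∀ i, a i < b i) ∧ R = {x | ∀ i, x i ∈ Set.Ioo (a i) (b i)}

/-- An open rectangle (possibly rotated rectangular parallelepiped) in `ℝⁿ`:
the image of an open axis-parallel rectangle under a rigid motion. -/
def IsRect {n : ℕ} (R : Set (EuclideanSpace ℝ (Fin n))) : Prop :=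
  ∃ (f : EuclideanSpace ℝ (Fin n) ≃ᵢ EuclideanSpace ℝ (Fin n))
    (S : Set (EuclideanSpace ℝ (Fin n))), IsAxisRect S ∧ R = f '' S

/-- An open axis-parallel cube in `ℝⁿ`. -/
def IsAxisCube {n : ℕ} (C : Set (EuclideanSpace ℝ (Fin n))) : Prop :=
  ∃ (a : Fin n → ℝ) (s : ℝ), 0 < s ∧ C = {x | ∀ i, x i ∈ Set.Ioo (a i) (a i + s)}

/-- `M_{𝔅,μ}` is bounded on `L^p(ν)`. -/
def BoundedOnLp {n : ℕ} (μ ν : Measure (EuclideanSpace ℝ (Fin n)))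
    (𝔅 : Set (Set (EuclideanSpace ℝ (Fin n)))) (p : ℝ) : Prop :=
  ∃ C : ℝ≥0∞, C ≠ ⊤ ∧ ∀ f : EuclideanSpace ℝ (Fin n) → ℝ, Measurable f →
    ∫⁻ x, maxOp μ 𝔅 f x ^ p ∂ν ≤ C * ∫⁻ x, ENNReal.ofReal |f x| ^ p ∂ν

/-- The Tauberian condition for `M_{𝔅,μ}` at level `γ`, with constant `c`, with respect
to the measure `ν`. -/
def TauberianCond {n : ℕ} (μ ν : Measure (EuclideanSpace ℝ (Fin n)))
    (𝔅 : Set (Set (EuclideanSpace ℝ (Fin n)))) (γ c : ℝ) : Prop :=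
  ∀ E : Set (EuclideanSpace ℝ (Fin n)), MeasurableSet E →
    ν {x | ENNReal.ofReal γ < maxOp μ 𝔅 (E.indicator 1) x} ≤ ENNReal.ofReal c * ν E

/-- The standard open dyadic box of scale `2^k` and position `m` in `ℝⁿ`. -/
def stdBox (n : ℕ) (k : ℤ) (m : Fin n → ℤ) : Set (Fin n → ℝ) :=
  {x | ∀ i, (m i : ℝ) * 2 ^ k < x i ∧ x i < ((m i : ℝ) + 1) * 2 ^ k}

/-- A parametrization of a rectangular grid: a rigid motion composed with a positive
diagonal scaling. The image of the standard unit box under such a map is a rectangle. -/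
def IsRectParam {n : ℕ} (T : (Fin n → ℝ) → EuclideanSpace ℝ (Fin n)) : Prop :=
  ∃ (f : EuclideanSpace ℝ (Fin n) ≃ᵢ EuclideanSpace ℝ (Fin n)) (l : Fin n → ℝ),
    (∀ i, 0 < l i) ∧
    ∀ x, T x = f ((WithLp.equiv 2 (Fin n → ℝ)).symm (fun i => l i * x i))

/-- The dyadic mesh generated by a rectangle parametrized by `T`. -/
def dyadicMesh {n : ℕ} (T : (Fin n → ℝ) → EuclideanSpace ℝ (Fin n)) :
    Set (Set (EuclideanSpace ℝ (Fin n))) :=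
  {S | ∃ (k : ℤ) (m : Fin n → ℤ), S = T '' stdBox n k m}

/-- `S` is a dyadic descendant of the rectangle `R`, `s` generations inside `R`. -/
def DyadicDescendant {n : ℕ} (R S : Set (EuclideanSpace ℝ (Fin n))) (s : ℕ) : Prop :=
  ∃ T : (Fin n → ℝ) → EuclideanSpace ℝ (Fin n), IsRectParam T ∧
    T '' stdBox n 0 0 = R ∧
    ∃ m : Fin n → ℤ, (∀ i, 0 ≤ m i ∧ m i < 2 ^ s) ∧ S = T '' stdBox n (-(s : ℤ)) m

/-- The family of all homothetic copies (translates and positive dilates) of `R₀`. -/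
def homCopies {n : ℕ} (R₀ : Set (EuclideanSpace ℝ (Fin n))) :
    Set (Set (EuclideanSpace ℝ (Fin n))) :=
  {S | ∃ (y : EuclideanSpace ℝ (Fin n)) (s : ℝ), 0 < s ∧ S = y +ᵥ s • R₀}

/-- Iterated halo sets `H_β^k(E)`: `H_β^0(E) = E` and
`H_β^{k+1}(E) = {x : M_{𝔊,μ}(1_{H_β^k(E)})(x) ≥ β}`. -/
def Hiter {n : ℕ} (μ : Measure (EuclideanSpace ℝ (Fin n)))
    (𝔊 : Set (Set (EuclideanSpace ℝ (Fin n)))) (β : ℝ)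
    (E : Set (EuclideanSpace ℝ (Fin n))) : ℕ → Set (EuclideanSpace ℝ (Fin n))
  | 0 => E
  | k + 1 => {x | ENNReal.ofReal β ≤ maxOp μ 𝔊 ((Hiter μ 𝔊 β E k).indicator 1) x}

/-- The Muckenhoupt `A_{p,𝔅}` condition for a weight `w` (with respect to Lebesgue
measure); here `1 - p/(p-1) = 1 - p'`. -/
def MuckenhouptAp {n : ℕ} (𝔅 : Set (Set (EuclideanSpace ℝ (Fin n))))
    (w : EuclideanSpace ℝ (Fin n) → ℝ) (p : ℝ) : Prop :=
  ∃ C : ℝ≥0∞, C ≠ ⊤ ∧ ∀ B ∈ 𝔅,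
    ((∫⁻ x in B, ENNReal.ofReal (w x) ∂volume) / volume B) *
      (((∫⁻ x in B, ENNReal.ofReal (w x) ^ (1 - p / (p - 1)) ∂volume) / volume B) ^ (p - 1))
      ≤ C

/-- `𝔅` is a Muckenhoupt basis: for every `1 < p < ∞` and every weight `w ∈ A_{p,𝔅}`,
the maximal operator `M_𝔅` is bounded on `L^p(w)`. -/
def MuckenhouptBasis {n : ℕ} (𝔅 : Set (Set (EuclideanSpace ℝ (Fin n)))) : Prop :=
  ∀ p : ℝ, 1 < p → ∀ w : EuclideanSpace ℝ (Fin n) → ℝ, (∀ x, 0 ≤ w x) →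
    LocallyIntegrable w volume → MuckenhouptAp 𝔅 w p →
    BoundedOnLp volume (volume.withDensity fun x => ENNReal.ofReal (w x)) 𝔅 p

end


noncomputable section AuxLemmas


/-- Positivity of balls for a nonzero doubling measure on `Fin n → ℝ` (sup norm). -/
lemma cube_pos {n : ℕ} (ν : Measure (Fin n → ℝ)) (hν : ν ≠ 0) {D : ℝ≥0∞}
    (hdb : ∀ z : Fin n → ℝ, ∀ s : ℝ, 0 < s → ν (Metric.ball z (2*s)) ≤ D * ν (Metric.ball z s))
    (z : Fin n → ℝ) {s : ℝ} (hs : 0 < s) : 0 < ν (Metric.ball z s) := by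
  by_contra h
  push_neg at h
  have h0 : ν (Metric.ball z s) = 0 := le_antisymm h zero_le
  have hk : ∀ k : ℕ, ν (Metric.ball z (2^k * s)) = 0 := by
    intro k
    induction k with
    | zero => simpa using h0
    | succ k ih =>
      have h2 : (2:ℝ)^(k+1) * s = 2 * (2^k * s) := by ring
      rw [h2]
      refine le_antisymm ?_ zero_le
      calc ν (Metric.ball z (2 * (2^k * s))) ≤ D * ν (Metric.ball z (2^k * s)) :=
            hdb z _ (by positivity)
        _ = 0 := by rw [ih, mul_zero]
  have huniv : (univ : Set (Fin n → ℝ)) ⊆ ⋃ k : ℕ, Metric.ball z (2^k * s) := by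
    intro p _
    obtain ⟨m, hm⟩ := exists_nat_gt (dist p z / s)
    refine mem_iUnion.2 ⟨m, ?_⟩
    have h1 : dist p z < m * s := by
      rw [div_lt_iff₀ hs] at hm
      exact hm
    have h2 : (m:ℝ) * s ≤ 2^m * s := by
      have : (m:ℝ) ≤ 2^m := by
        exact_mod_cast (Nat.lt_two_pow_self (n := m)).le
      nlinarith
    exact Metric.mem_ball.2 (lt_of_lt_of_le h1 h2)
  have : ν univ = 0 := le_antisymm
    (le_trans (measure_mono huniv) (le_of_eq (measure_iUnion_null hk))) zero_le
  exact hν (Measure.measure_univ_eq_zero.1 this)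



lemma face_null {n : ℕ} (ν : Measure (Fin n → ℝ)) [IsFiniteMeasureOnCompacts ν]
    {D : ℝ≥0∞} (hD : D ≠ ⊤)
    (hdb : ∀ z : Fin n → ℝ, ∀ s : ℝ, 0 < s → ν (Metric.ball z (2*s)) ≤ D * ν (Metric.ball z s))
    (x : Fin n → ℝ) {r : ℝ} (hr : 0 < r) (i : Fin n) {e : ℝ} (he : e = 1 ∨ e = -1) :
    ν {y | y i - x i = e * r ∧ ∀ j, |y j - x j| ≤ r} = 0 := by
  classical
  have he1 : |e| = 1 := by rcases he with rfl | rfl <;> simp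
  have hee : e * e = 1 := by rcases he with rfl | rfl <;> norm_num
  set F : Set (Fin n → ℝ) := {y | y i - x i = e * r ∧ ∀ j, |y j - x j| ≤ r} with hF
  set V : ℕ → Set (Fin n → ℝ) := fun k =>
    {y | r - 4 * (r/(8*(k+1))) < e * (y i - x i) ∧ e * (y i - x i) < r} ∩
      Metric.closedBall x (6*r) with hV
  -- main estimate
  have hsuf : ∀ k : ℕ, ν F ≤ D * (D * (D * ν (V k))) := by
    intro k
    set δ : ℝ := r/(8*(k+1)) with hδdef
    have hδ : 0 < δ := by positivity
    have hδr8 : δ ≤ r/8 := by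
      rw [hδdef]
      apply div_le_div_of_nonneg_left hr.le (by norm_num)
      have : (0:ℝ) ≤ (k:ℝ) := Nat.cast_nonneg k
      nlinarith
    have hδr : 8 * δ ≤ r := by linarith
    have hrδ : (8:ℝ) ≤ r / δ := by
      rw [le_div_iff₀ hδ]; linarith
    set B : ℤ := ⌈r/δ⌉ with hBdef
    have hB : r/δ ≤ (B:ℝ) := Int.le_ceil _
    have hB1 : (B:ℝ) < r/δ + 1 := Int.ceil_lt_add_one _
    set M : Finset (Fin n → ℤ) :=
      Fintype.piFinset (fun j => if j = i then {0} else Finset.Icc (-B) B) with hM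
    set w : (Fin n → ℤ) → (Fin n → ℝ) :=
      fun m j => if j = i then x i + e*r else x j + 4*δ*(m j) with hw
    set w' : (Fin n → ℤ) → (Fin n → ℝ) :=
      fun m j => if j = i then x i + e*r - 3*δ*e else x j + 4*δ*(m j) with hw'
    -- covering
    have hcov : F ⊆ ⋃ m ∈ M, Metric.ball (w m) (3*δ) := by
      rintro y ⟨hyi, hyb⟩
      set m : Fin n → ℤ := fun j => if j = i then 0 else round ((y j - x j)/(4*δ)) with hm
      have hmM : m ∈ M := by
        rw [hM, Fintype.mem_piFinset]
        intro j
        by_cases hj : j = i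
        · simp [hm, hj]
        · simp only [hm, hj, if_neg, not_false_iff, Finset.mem_Icc]
          set t : ℝ := (y j - x j)/(4*δ) with htdef
          have ht : |t| ≤ r/(4*δ) := by
            rw [htdef, abs_div, abs_of_pos (by positivity : (0:ℝ) < 4*δ)]
            exact div_le_div_of_nonneg_right (hyb j) (by positivity)
          have h1 : |((round t : ℤ) : ℝ)| ≤ (B:ℝ) := by
            have h2 : |((round t : ℤ) : ℝ)| - |t| ≤ |(round t : ℤ) - t| :=
              abs_sub_abs_le_abs_sub _ _
            have h3 : |(round t : ℤ) - t| ≤ 1/2 := by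
              rw [abs_sub_comm]; exact abs_sub_round t
            have h4 : r/(4*δ) + 1/2 ≤ r/δ := by
              have h4' : r/(4*δ) = (r/δ)/4 := by rw [div_div, mul_comm]
              rw [h4']; linarith
            linarith
          have h5 : |round t| ≤ B := by
            have h6 : ((|round t| : ℤ) : ℝ) ≤ (B : ℝ) := by rw [Int.cast_abs]; exact h1
            exact_mod_cast h6
          exact abs_le.1 h5
      refine Set.mem_biUnion hmM ?_
      rw [Metric.mem_ball, dist_pi_lt_iff (by positivity : (0:ℝ) < 3*δ)]
      intro j
      rw [Real.dist_eq]
      by_cases hj : j = i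
      · subst hj
        have : w m j = x j + e*r := by simp [hw]
        rw [this]
        have : y j - (x j + e*r) = 0 := by linarith [hyi]
        rw [this, abs_zero]; positivity
      · have hwj : w m j = x j + 4*δ*(round ((y j - x j)/(4*δ))) := by simp [hw, hm, hj]
        rw [hwj]
        have h4 : y j - (x j + 4*δ*(round ((y j - x j)/(4*δ))))
            = 4*δ*((y j - x j)/(4*δ) - round ((y j - x j)/(4*δ))) := by
          field_simp
          ring
        rw [h4, abs_mul, abs_of_pos (by positivity : (0:ℝ) < 4*δ)]
        have := abs_sub_round ((y j - x j)/(4*δ))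
        nlinarith
    -- single ball estimate
    have hball : ∀ m : Fin n → ℤ,
        ν (Metric.ball (w m) (3*δ)) ≤ D * (D * (D * ν (Metric.ball (w' m) δ))) := by
      intro m
      have hdist : dist (w m) (w' m) ≤ 3*δ := by
        rw [dist_pi_le_iff (by positivity : (0:ℝ) ≤ 3*δ)]
        intro j
        rw [Real.dist_eq]
        by_cases hj : j = i
        · subst hj
          have h1 : w m j = x j + e*r := by simp [hw]
          have h2 : w' m j = x j + e*r - 3*δ*e := by simp [hw']
          rw [h1, h2]
          have : x j + e*r - (x j + e*r - 3*δ*e) = 3*δ*e := by ring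
          rw [this, abs_mul, he1, mul_one, abs_of_pos (by positivity : (0:ℝ) < 3*δ)]
        · have h1 : w m j = x j + 4*δ*(m j) := by simp [hw, hj]
          have h2 : w' m j = x j + 4*δ*(m j) := by simp [hw', hj]
          rw [h1, h2, sub_self, abs_zero]; positivity
      have hsub8 : Metric.ball (w m) (3*δ) ⊆ Metric.ball (w' m) (2*(2*(2*δ))) := by
        intro p hp
        rw [Metric.mem_ball] at hp ⊢
        calc dist p (w' m) ≤ dist p (w m) + dist (w m) (w' m) := dist_triangle _ _ _
          _ < 3*δ + 3*δ := by linarith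
          _ ≤ 2*(2*(2*δ)) := by linarith
      calc ν (Metric.ball (w m) (3*δ)) ≤ ν (Metric.ball (w' m) (2*(2*(2*δ)))) :=
            measure_mono hsub8
        _ ≤ D * ν (Metric.ball (w' m) (2*(2*δ))) := hdb _ _ (by positivity)
        _ ≤ D * (D * ν (Metric.ball (w' m) (2*δ))) :=
            mul_le_mul_right (hdb _ _ (by positivity)) D
        _ ≤ D * (D * (D * ν (Metric.ball (w' m) δ))) :=
            mul_le_mul_right (mul_le_mul_right (hdb _ _ hδ) D) D
    -- disjointness
    have hdisj : (↑M : Set (Fin n → ℤ)).PairwiseDisjoint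
        (fun m => Metric.ball (w' m) δ) := by
      intro m hm m' hm' hne
      rw [Function.onFun, Set.disjoint_left]
      intro p hp hp'
      obtain ⟨j, hj⟩ := Function.ne_iff.1 hne
      have hji : j ≠ i := by
        intro h
        have hmj := Fintype.mem_piFinset.1 hm j
        have hmj' := Fintype.mem_piFinset.1 hm' j
        rw [if_pos h, Finset.mem_singleton] at hmj hmj'
        exact hj (hmj.trans hmj'.symm)
      have h1 : (1:ℝ) ≤ |(m j : ℝ) - (m' j : ℝ)| := by
        have h2 : (1:ℤ) ≤ |m j - m' j| := Int.one_le_abs (sub_ne_zero.2 hj)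
        have h3 : ((|m j - m' j| : ℤ) : ℝ) = |(m j : ℝ) - (m' j : ℝ)| := by
          push_cast [Int.cast_abs]; ring_nf
        exact_mod_cast h3 ▸ (by exact_mod_cast h2 : ((1:ℤ):ℝ) ≤ ((|m j - m' j| : ℤ):ℝ))
      have hwj : w' m j = x j + 4*δ*(m j) := by simp [hw', hji]
      have hwj' : w' m' j = x j + 4*δ*(m' j) := by simp [hw', hji]
      have hd : 4*δ ≤ dist (w' m j) (w' m' j) := by
        rw [Real.dist_eq, hwj, hwj']
        have : x j + 4*δ*(m j) - (x j + 4*δ*(m' j)) = 4*δ*((m j : ℝ) - (m' j : ℝ)) := by ring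
        rw [this, abs_mul, abs_of_pos (by positivity : (0:ℝ) < 4*δ)]
        nlinarith
      have h5 : dist (w' m j) (w' m' j) ≤ dist (w' m) (w' m') := dist_le_pi_dist _ _ _
      have h6 : dist (w' m) (w' m') ≤ dist p (w' m) + dist p (w' m') := by
        rw [dist_comm p (w' m)]; exact dist_triangle _ _ _
      have h7 := Metric.mem_ball.1 hp
      have h8 := Metric.mem_ball.1 hp'
      linarith
    -- union of companions inside V k
    have hUsub : (⋃ m ∈ M, Metric.ball (w' m) δ) ⊆ V k := by
      intro p hp
      rw [Set.mem_iUnion₂] at hp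
      obtain ⟨m, hmM, hpm⟩ := hp
      have hcoord : ∀ j, |p j - w' m j| < δ := by
        intro j
        have h := dist_le_pi_dist p (w' m) j
        have h2 := Metric.mem_ball.1 hpm
        rw [Real.dist_eq] at h
        linarith
      have hwi : w' m i = x i + e*r - 3*δ*e := by simp [hw']
      have key : e*(p i - x i) - e*(p i - w' m i) = r - 3*δ := by
        rw [hwi]; linear_combination (r - 3*δ) * hee
      have habs : |e*(p i - w' m i)| < δ := by
        rw [abs_mul, he1, one_mul]; exact hcoord i
      have habs' := abs_lt.1 habs
      constructor
      · constructor
        · show r - 4 * (r/(8*(k+1))) < e * (p i - x i)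
          rw [← hδdef]
          linarith
        · show e * (p i - x i) < r
          linarith
      · rw [Metric.mem_closedBall, dist_pi_le_iff (by positivity : (0:ℝ) ≤ 6*r)]
        intro j
        rw [Real.dist_eq]
        by_cases hj : j = i
        · subst hj
          have h1 : |p j - x j| ≤ |p j - w' m j| + |w' m j - x j| := by
            have : p j - x j = (p j - w' m j) + (w' m j - x j) := by ring
            rw [this]; exact abs_add_le _ _
          have h2 : |w' m j - x j| ≤ r := by
            rw [hwi]
            have : x j + e*r - 3*δ*e - x j = e*(r - 3*δ) := by ring
            rw [this, abs_mul, he1, one_mul, abs_of_nonneg (by linarith : (0:ℝ) ≤ r - 3*δ)]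
            linarith
          linarith [hcoord j]
        · have hwj : w' m j = x j + 4*δ*(m j) := by simp [hw', hj]
          have hmB : |(m j : ℝ)| ≤ (B:ℝ) := by
            have hmj : m j ∈ (if j = i then ({0} : Finset ℤ) else Finset.Icc (-B) B) :=
              Fintype.mem_piFinset.1 hmM j
            rw [if_neg hj, Finset.mem_Icc] at hmj
            have h9 : |m j| ≤ B := abs_le.2 hmj
            have h10 : ((|m j| : ℤ) : ℝ) ≤ (B : ℝ) := by exact_mod_cast h9
            rw [Int.cast_abs] at h10
            exact h10
          have h1 : |p j - x j| ≤ |p j - w' m j| + |w' m j - x j| := by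
            have : p j - x j = (p j - w' m j) + (w' m j - x j) := by ring
            rw [this]; exact abs_add_le _ _
          have h2 : |w' m j - x j| ≤ 4*δ*(B:ℝ) := by
            rw [hwj]
            have : x j + 4*δ*(m j) - x j = 4*δ*(m j : ℝ) := by ring
            rw [this, abs_mul, abs_of_pos (by positivity : (0:ℝ) < 4*δ)]
            nlinarith
          have h3 : 4*δ*(B:ℝ) < 4*δ*(r/δ + 1) := by
            apply mul_lt_mul_of_pos_left hB1 (by positivity)
          have h4 : 4*δ*(r/δ + 1) = 4*r + 4*δ := by field_simp
          linarith [hcoord j]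
    -- combine
    calc ν F ≤ ν (⋃ m ∈ M, Metric.ball (w m) (3*δ)) := measure_mono hcov
      _ ≤ ∑ m ∈ M, ν (Metric.ball (w m) (3*δ)) := measure_biUnion_finset_le M _
      _ ≤ ∑ m ∈ M, (D * (D * (D * ν (Metric.ball (w' m) δ)))) :=
          Finset.sum_le_sum (fun m _ => hball m)
      _ = D * (D * (D * ∑ m ∈ M, ν (Metric.ball (w' m) δ))) := by
          rw [Finset.mul_sum, Finset.mul_sum, Finset.mul_sum]
      _ = D * (D * (D * ν (⋃ m ∈ M, Metric.ball (w' m) δ))) := by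
          rw [measure_biUnion_finset hdisj (fun m _ => Metric.isOpen_ball.measurableSet)]
      _ ≤ D * (D * (D * ν (V k))) :=
          mul_le_mul_right (mul_le_mul_right (mul_le_mul_right (measure_mono hUsub) D) D) D
  -- limit argument
  have hVmeas : ∀ k, MeasurableSet (V k) := by
    intro k
    refine MeasurableSet.inter ?_ measurableSet_closedBall
    refine MeasurableSet.inter ?_ ?_
    · exact measurableSet_lt measurable_const ((measurable_const.mul
        ((measurable_pi_apply i).sub measurable_const)))
    · exact measurableSet_lt ((measurable_const.mul
        ((measurable_pi_apply i).sub measurable_const))) measurable_const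
  have hVanti : Antitone V := by
    intro k k' hkk'
    refine Set.inter_subset_inter ?_ le_rfl
    intro y hy
    refine ⟨lt_of_le_of_lt ?_ hy.1, hy.2⟩
    have h1 : r/(8*(k'+1)) ≤ r/(8*(k+1)) := by
      apply div_le_div_of_nonneg_left hr.le (by positivity)
      have : (k:ℝ) ≤ k' := by exact_mod_cast hkk'
      nlinarith
    nlinarith
  have hVempty : ⋂ k, V k = ∅ := by
    rw [Set.eq_empty_iff_forall_notMem]
    intro y hy
    have hyk : ∀ k : ℕ, r - 4 * (r/(8*(k+1))) < e * (y i - x i) ∧ e * (y i - x i) < r :=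
      fun k => (Set.mem_iInter.1 hy k).1
    set t := e * (y i - x i) with ht
    have htr : t < r := (hyk 0).2
    obtain ⟨K, hK⟩ := exists_nat_gt (r/(2*(r - t)))
    have h1 : r - 4 * (r/(8*(K+1))) < t := (hyk K).1
    have h3 : r/(2*(K+1)) < r - t := by
      rw [div_lt_iff₀ (by positivity)]
      rw [div_lt_iff₀ (by nlinarith : (0:ℝ) < 2*(r-t))] at hK
      nlinarith
    have h2 : 4 * (r/(8*(K+1))) = r/(2*(K+1)) := by
      field_simp; ring
    rw [h2] at h1
    linarith
  have hfin : ν (V 0) ≠ ⊤ := by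
    refine ne_top_of_le_ne_top ?_ (measure_mono Set.inter_subset_right)
    exact (isCompact_closedBall x (6*r)).measure_lt_top.ne
  have htnd : Tendsto (fun k => ν (V k)) atTop (𝓝 0) := by
    have := tendsto_measure_iInter_atTop (fun k => (hVmeas k).nullMeasurableSet) hVanti ⟨0, hfin⟩
    rw [hVempty] at this
    simpa [Function.comp_def] using this
  have htnd2 : Tendsto (fun k => D * (D * (D * ν (V k)))) atTop (𝓝 0) := by
    have h3 : Tendsto (fun k => D * ν (V k)) atTop (𝓝 0) := by
      simpa using ENNReal.Tendsto.const_mul htnd (Or.inr hD)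
    have h2 : Tendsto (fun k => D * (D * ν (V k))) atTop (𝓝 0) := by
      simpa using ENNReal.Tendsto.const_mul h3 (Or.inr hD)
    simpa using ENNReal.Tendsto.const_mul h2 (Or.inr hD)
  have hle : ν F ≤ 0 := ge_of_tendsto' htnd2 hsuf
  exact le_antisymm hle zero_le

lemma sphere_null {n : ℕ} (ν : Measure (Fin n → ℝ)) [IsFiniteMeasureOnCompacts ν]
    {D : ℝ≥0∞} (hD : D ≠ ⊤)
    (hdb : ∀ z : Fin n → ℝ, ∀ s : ℝ, 0 < s → ν (Metric.ball z (2*s)) ≤ D * ν (Metric.ball z s))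
    (x : Fin n → ℝ) {r : ℝ} (hr : 0 < r) : ν (Metric.sphere x r) = 0 := by
  have hsub : Metric.sphere x r ⊆
      ⋃ i : Fin n, ({y | y i - x i = 1 * r ∧ ∀ j, |y j - x j| ≤ r} ∪
        {y | y i - x i = (-1) * r ∧ ∀ j, |y j - x j| ≤ r}) := by
    intro y hy
    have hy' : dist y x = r := hy
    have hle : ∀ j, |y j - x j| ≤ r := by
      intro j
      rw [← Real.dist_eq]
      exact (dist_le_pi_dist y x j).trans hy'.le
    have hnot : ¬ ∀ j, |y j - x j| < r := by
      intro hall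
      have : dist y x < r := (dist_pi_lt_iff hr).2 (fun b => by rw [Real.dist_eq]; exact hall b)
      exact absurd hy' (ne_of_lt this)
    push_neg at hnot
    obtain ⟨i, hi⟩ := hnot
    have heq : |y i - x i| = r := le_antisymm (hle i) hi
    rcases (abs_eq hr.le).1 heq with h | h
    · exact mem_iUnion.2 ⟨i, Or.inl ⟨by linarith, hle⟩⟩
    · exact mem_iUnion.2 ⟨i, Or.inr ⟨by linarith, hle⟩⟩
  refine le_antisymm (le_trans (measure_mono hsub) (le_of_eq ?_)) zero_le
  refine measure_iUnion_null fun i => measure_union_null ?_ ?_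
  · exact face_null ν hD hdb x hr i (Or.inl rfl)
  · exact face_null ν hD hdb x hr i (Or.inr rfl)



variable {n : ℕ}

/-- Affine parametrization of the homothety class of a rectangle. -/
def tmap (f : EuclideanSpace ℝ (Fin n) ≃ᵢ EuclideanSpace ℝ (Fin n)) (c h : Fin n → ℝ)
    (y : Fin n → ℝ) : EuclideanSpace ℝ (Fin n) :=
  f ((EuclideanSpace.equiv (Fin n) ℝ).symm (fun i => c i + h i * y i))

lemma smul_vadd_set (r : ℝ) (a : EuclideanSpace ℝ (Fin n)) (A : Set (EuclideanSpace ℝ (Fin n))) :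
    r • (a +ᵥ A) = (r • a) +ᵥ (r • A) := by
  ext p
  constructor
  · rintro ⟨q, ⟨u, hu, rfl⟩, rfl⟩
    exact ⟨r • u, smul_mem_smul_set hu, by simp [smul_add]⟩
  · rintro ⟨q, ⟨u, hu, rfl⟩, rfl⟩
    exact ⟨a + u, ⟨u, hu, rfl⟩, by simp [smul_add]⟩

lemma smul_smul_set (r t : ℝ) (A : Set (EuclideanSpace ℝ (Fin n))) :
    r • (t • A) = (r * t) • A := by
  ext p
  constructor
  · rintro ⟨q, ⟨u, hu, rfl⟩, rfl⟩
    exact ⟨u, hu, by simp [smul_smul]⟩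
  · rintro ⟨u, hu, rfl⟩
    exact ⟨t • u, ⟨u, hu, rfl⟩, by simp [smul_smul]⟩

lemma tmap_image_ball {f : EuclideanSpace ℝ (Fin n) ≃ᵢ EuclideanSpace ℝ (Fin n)}
    {c h : Fin n → ℝ} (hh : ∀ i, 0 < h i) {z : Fin n → ℝ} {s : ℝ} (hs : 0 < s) :
    tmap f c h '' Metric.ball z s
      = (tmap f c h z - s • f ((EuclideanSpace.equiv (Fin n) ℝ).symm c)) +ᵥ
        s • (f '' {u : EuclideanSpace ℝ (Fin n) | ∀ i, u i ∈ Set.Ioo (c i - h i) (c i + h i)}) := by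
  classical
  set L := f.toRealLinearIsometryEquiv with hL
  have hfL : ∀ p, f p = L p + f 0 := by
    intro p
    rw [hL, IsometryEquiv.toRealLinearIsometryEquiv_apply, sub_add_cancel]
  have hfsub : ∀ p q, f p - f q = L (p - q) := by
    intro p q
    rw [hfL p, hfL q, map_sub]
    abel
  set V := (EuclideanSpace.equiv (Fin n) ℝ).symm with hVdef
  have hVcoord : ∀ (v : Fin n → ℝ) (i : Fin n), (V v) i = v i := fun v i => rfl
  -- key algebraic identity
  have key : ∀ y : Fin n → ℝ,
      (tmap f c h z - s • f (V c)) + s • f (V (fun i => c i + h i * (y i - z i) / s))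
        = tmap f c h y := by
    intro y
    have h1 : tmap f c h y - tmap f c h z
        = s • (f (V (fun i => c i + h i * (y i - z i) / s)) - f (V c)) := by
      simp only [tmap]
      rw [hfsub, hfsub, ← V.map_sub, ← V.map_sub, ← L.map_smul, ← V.map_smul]
      congr 2
      funext i
      simp only [Pi.sub_apply, Pi.smul_apply, smul_eq_mul]
      field_simp
      ring
    have h2 : tmap f c h y = tmap f c h z
        + s • (f (V (fun i => c i + h i * (y i - z i) / s)) - f (V c)) := by
      rw [← h1]; abel
    rw [h2, smul_sub]; abel
  ext p
  constructor
  · rintro ⟨y, hy, rfl⟩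
    rw [Metric.mem_ball, dist_pi_lt_iff hs] at hy
    have huIoo : V (fun i => c i + h i * (y i - z i) / s) ∈
        {u : EuclideanSpace ℝ (Fin n) | ∀ i, u i ∈ Set.Ioo (c i - h i) (c i + h i)} := by
      intro i
      rw [hVcoord]
      have h1 : |y i - z i| < s := by
        have := hy i; rwa [Real.dist_eq] at this
      have h2 : |h i * (y i - z i) / s| < h i := by
        rw [abs_div, abs_mul, abs_of_pos (hh i), abs_of_pos hs, div_lt_iff₀ hs]
        nlinarith [mul_lt_mul_of_pos_left h1 (hh i)]
      have h3 := abs_lt.1 h2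
      exact ⟨by linarith [h3.1], by linarith [h3.2]⟩
    refine ⟨s • f (V (fun i => c i + h i * (y i - z i) / s)),
      smul_mem_smul_set (Set.mem_image_of_mem f huIoo), ?_⟩
    exact key y
  · rintro ⟨q, ⟨w, ⟨uE, huE, rfl⟩, rfl⟩, rfl⟩
    set y : Fin n → ℝ := fun i => z i + s * (uE i - c i) / h i with hy
    have hcoordeq : (fun i => c i + h i * (y i - z i) / s) = (fun i => uE i) := by
      funext i
      have h2 : y i - z i = s * (uE i - c i) / h i := by simp [hy]
      rw [h2]
      have hhi := (hh i).ne'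
      have hs' := hs.ne'
      field_simp
      ring
    have hVuE : V (fun i => uE i) = uE :=
      by rw [hVdef]; ext i; rfl
    refine ⟨y, ?_, ?_⟩
    · rw [Metric.mem_ball, dist_pi_lt_iff hs]
      intro i
      rw [Real.dist_eq]
      have h1 : |uE i - c i| < h i := by
        have := huE i
        rw [Set.mem_Ioo] at this
        rw [abs_lt]; constructor <;> linarith [this.1, this.2]
      have h2 : y i - z i = s * (uE i - c i) / h i := by simp [hy]
      rw [h2, abs_div, abs_mul, abs_of_pos hs, abs_of_pos (hh i), div_lt_iff₀ (hh i)]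
      nlinarith [mul_lt_mul_of_pos_left h1 hs]
    · have hVeq : V (fun i => c i + h i * (y i - z i) / s) = uE := by
        rw [hcoordeq]
        exact hVuE
      rw [← key y, hVeq]
      rfl


variable {n : ℕ} {μ : Measure (EuclideanSpace ℝ (Fin n))}
  {𝔊 : Set (Set (EuclideanSpace ℝ (Fin n)))}

lemma isAxisRect_isOpen {S : Set (EuclideanSpace ℝ (Fin n))} (hS : IsAxisRect S) : IsOpen S := by
  obtain ⟨a, b, hab, rfl⟩ := hS
  have : {x : EuclideanSpace ℝ (Fin n) | ∀ i, x i ∈ Set.Ioo (a i) (b i)}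
      = ⋂ i, (fun x : EuclideanSpace ℝ (Fin n) => x i) ⁻¹' (Set.Ioo (a i) (b i)) := by
    ext x; simp [Set.mem_iInter]
  rw [this]
  refine isOpen_iInter_of_finite fun i => ?_
  refine IsOpen.preimage ?_ isOpen_Ioo
  exact (continuous_apply i).comp (PiLp.continuous_ofLp (p := 2) (β := fun _ : Fin n => ℝ))

lemma isRect_isOpen {R : Set (EuclideanSpace ℝ (Fin n))} (hR : IsRect R) : IsOpen R := by
  obtain ⟨f, S, hS, rfl⟩ := hR
  exact f.toHomeomorph.isOpenMap S (isAxisRect_isOpen hS)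

lemma le_maxOp {f : EuclideanSpace ℝ (Fin n) → ℝ} {x : EuclideanSpace ℝ (Fin n)}
    {B : Set (EuclideanSpace ℝ (Fin n))} (h1 : B ∈ 𝔊) (h2 : x ∈ B) (h3 : 0 < μ B) :
    (∫⁻ y in B, ENNReal.ofReal |f y| ∂μ) / μ B ≤ maxOp μ 𝔊 f x := by
  refine le_iSup_of_le B ?_
  rw [iSup_pos h1, iSup_pos h2, iSup_pos h3]

lemma isOpen_lt_maxOp (hG : ∀ B ∈ 𝔊, IsRect B) (f : EuclideanSpace ℝ (Fin n) → ℝ)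
    (t : ℝ≥0∞) : IsOpen {x | t < maxOp μ 𝔊 f x} := by
  rw [isOpen_iff_forall_mem_open]
  intro x hx
  simp only [Set.mem_setOf_eq, maxOp, lt_iSup_iff] at hx
  obtain ⟨B, hB𝔊, hxB, hμB, hlt⟩ := hx
  refine ⟨B, fun x' hx' => ?_, isRect_isOpen (hG B hB𝔊), hxB⟩
  exact lt_of_lt_of_le hlt (le_maxOp hB𝔊 hx' hμB)

lemma maxOp_measurable (hG : ∀ B ∈ 𝔊, IsRect B) (f : EuclideanSpace ℝ (Fin n) → ℝ) :
    Measurable (maxOp μ 𝔊 f) :=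
  measurable_of_Ioi fun t => (isOpen_lt_maxOp hG f t).measurableSet

lemma Hiter_measurable (hG : ∀ B ∈ 𝔊, IsRect B) {β : ℝ} {E : Set (EuclideanSpace ℝ (Fin n))}
    (hE : MeasurableSet E) : ∀ k, MeasurableSet (Hiter μ 𝔊 β E k)
  | 0 => hE
  | (k+1) => measurableSet_le measurable_const (maxOp_measurable hG _)

lemma lintegral_indicator_abs {S B : Set (EuclideanSpace ℝ (Fin n))} (hS : MeasurableSet S)
    (hB : MeasurableSet B) :
    (∫⁻ y in B, ENNReal.ofReal |S.indicator (1 : EuclideanSpace ℝ (Fin n) → ℝ) y| ∂μ)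
      = μ (S ∩ B) := by
  have heq : (fun y => ENNReal.ofReal |S.indicator (1 : EuclideanSpace ℝ (Fin n) → ℝ) y|)
      = S.indicator (fun _ => (1 : ℝ≥0∞)) := by
    funext y
    by_cases hy : y ∈ S
    · simp [Set.indicator_of_mem hy]
    · simp [Set.indicator_of_notMem hy]
  rw [heq, MeasureTheory.lintegral_indicator hS, MeasureTheory.setLIntegral_one,
    Measure.restrict_apply hS, Set.inter_comm]

lemma mem_Hiter_succ {β : ℝ} {E : Set (EuclideanSpace ℝ (Fin n))}
    (hG : ∀ B ∈ 𝔊, IsRect B) (hE : MeasurableSet E) {k : ℕ}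
    {A B : Set (EuclideanSpace ℝ (Fin n))} (hB : B ∈ 𝔊) (hB0 : 0 < μ B) (hBt : μ B ≠ ⊤)
    (hA : A ⊆ Hiter μ 𝔊 β E k) (hAB : ENNReal.ofReal β * μ B ≤ μ (A ∩ B))
    {x : EuclideanSpace ℝ (Fin n)} (hx : x ∈ B) : x ∈ Hiter μ 𝔊 β E (k+1) := by
  show ENNReal.ofReal β ≤ maxOp μ 𝔊 ((Hiter μ 𝔊 β E k).indicator 1) x
  have hint : (∫⁻ y in B, ENNReal.ofReal |(Hiter μ 𝔊 β E k).indicator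
      (1 : EuclideanSpace ℝ (Fin n) → ℝ) y| ∂μ) = μ (Hiter μ 𝔊 β E k ∩ B) :=
    lintegral_indicator_abs (Hiter_measurable hG hE k)
      (isRect_isOpen (hG B hB)).measurableSet
  calc ENNReal.ofReal β = ENNReal.ofReal β * μ B / μ B := by
        rw [mul_div_assoc, ENNReal.div_self hB0.ne' hBt, mul_one]
    _ ≤ μ (Hiter μ 𝔊 β E k ∩ B) / μ B := by
        apply ENNReal.div_le_div_right
        exact le_trans hAB (measure_mono (Set.inter_subset_inter hA le_rfl))
    _ ≤ maxOp μ 𝔊 ((Hiter μ 𝔊 β E k).indicator 1) x := by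
        rw [← hint]
        exact le_maxOp hB hx hB0


end AuxLemmas

set_option maxHeartbeats 2000000 in
/-- Lemma `l.interm` of the paper. Under the hypotheses of Lemma
`l.main`, there is a nonnegative integer `N` with `β^{-(N+1)} ≥ Δ_μ` such that
`μ(R ∩ H_β^{N+2}(E)) ≥ (1/β)·μ(E ∩ R)`. -/
theorem statement8 (n : ℕ) (𝔊 : Set (Set (EuclideanSpace ℝ (Fin n))))
    (hG : ∀ R ∈ 𝔊, IsRect R) (hhom : HomothecyInvariant 𝔊)
    (μ : Measure (EuclideanSpace ℝ (Fin n)))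
    (hloc : IsLocallyFiniteMeasure μ) (hμ : μ ≠ 0)
    (Δ : ℝ) (hΔ : 1 < Δ) (hdbl : DoublingWrt μ 𝔊 Δ)
    (β : ℝ) (hβ : β ∈ Set.Ioo (0 : ℝ) 1)
    (E : Set (EuclideanSpace ℝ (Fin n))) (hE : MeasurableSet E)
    (R : Set (EuclideanSpace ℝ (Fin n))) (hR : R ∈ 𝔊) (hRpos : 0 < μ R)
    (α : ℝ) (hα : α ∈ Set.Ioo (0 : ℝ) β)
    (hratio : μ (E ∩ R) = ENNReal.ofReal α * μ R) :
    ∃ N : ℕ, Δ ≤ β ^ (-((N : ℤ) + 1)) ∧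
      ENNReal.ofReal (1 / β) * μ (E ∩ R) ≤ μ (R ∩ Hiter μ 𝔊 β E (N + 2)) := by
  classical
  haveI := hloc
  have hβ0 := hβ.1
  have hβ1 := hβ.2
  -- ## rectangle data and the affine chart T
  obtain ⟨f, Sax, hSaxRect, hRf⟩ := hG R hR
  obtain ⟨a, b, hab, hSax⟩ := hSaxRect
  set c : Fin n → ℝ := fun i => (a i + b i)/2 with hc
  set hl : Fin n → ℝ := fun i => (b i - a i)/2 with hhl
  have hh : ∀ i, 0 < hl i := fun i => by
    have := hab i
    simp only [hhl]
    linarith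
  have hbox : {u : EuclideanSpace ℝ (Fin n) |
      ∀ i, u i ∈ Set.Ioo (c i - hl i) (c i + hl i)} = Sax := by
    rw [hSax]
    ext u
    refine forall_congr' fun i => ?_
    have h1 : c i - hl i = a i := by simp only [hc, hhl]; ring
    have h2 : c i + hl i = b i := by simp only [hc, hhl]; ring
    rw [h1, h2]
  set T : (Fin n → ℝ) → EuclideanSpace ℝ (Fin n) := tmap f c hl with hT
  have himg : ∀ (z : Fin n → ℝ) {s : ℝ}, 0 < s → T '' Metric.ball z s
      = (T z - s • f ((EuclideanSpace.equiv (Fin n) ℝ).symm c)) +ᵥ s • R := by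
    intro z s hs
    rw [hT, tmap_image_ball hh hs, hbox, ← hRf]
  have hT𝔊 : ∀ (z : Fin n → ℝ) {s : ℝ}, 0 < s → T '' Metric.ball z s ∈ 𝔊 := by
    intro z s hs
    rw [himg z hs]
    exact (hhom _ ((hhom R hR).2 s hs)).1 _
  have hTR : T '' Metric.ball 0 1 = R := by
    rw [himg 0 one_pos]
    have h0 : T 0 = f ((EuclideanSpace.equiv (Fin n) ℝ).symm c) := by
      rw [hT]
      unfold tmap
      congr 1
      congr 1
      funext i
      simp
    rw [h0, one_smul, sub_self, zero_vadd, one_smul]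
  -- ## doubling for images of balls
  have hTdb : ∀ (z : Fin n → ℝ) {s : ℝ}, 0 < s →
      μ (T '' Metric.ball z (2*s)) ≤ ENNReal.ofReal Δ * μ (T '' Metric.ball z s) := by
    intro z s hs
    have h2s : (0:ℝ) < 2*s := by linarith
    set σ₁ := T z - s • f ((EuclideanSpace.equiv (Fin n) ℝ).symm c) with hσ₁
    set σ₂ := T z - (2*s) • f ((EuclideanSpace.equiv (Fin n) ℝ).symm c) with hσ₂
    set σ := σ₂ - (2:ℝ) • σ₁ with hσ
    have hB𝔊 : T '' Metric.ball z s ∈ 𝔊 := hT𝔊 z hs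
    have hkey : σ +ᵥ (2:ℝ) • (T '' Metric.ball z s) = T '' Metric.ball z (2*s) := by
      rw [himg z hs, himg z h2s, smul_vadd_set, smul_smul_set, vadd_vadd]
      congr 1
      rw [hσ]
      exact sub_add_cancel _ _
    have hsub : T '' Metric.ball z s ⊆ σ +ᵥ (2:ℝ) • (T '' Metric.ball z s) := by
      rw [hkey]
      exact Set.image_mono (Metric.ball_subset_ball (by linarith))
    have := hdbl _ hB𝔊 σ hsub
    rwa [hkey] at this
  -- ## homeomorphism and transferred measure
  have hcontT : Continuous T := by
    rw [hT]
    exact f.continuous.comp ((EuclideanSpace.equiv (Fin n) ℝ).symm.continuous.comp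
      (continuous_pi fun i => continuous_const.add (continuous_const.mul (continuous_apply i))))
  set Tinv : EuclideanSpace ℝ (Fin n) → (Fin n → ℝ) :=
    fun p i => (((EuclideanSpace.equiv (Fin n) ℝ) (f.symm p)) i - c i)/ hl i with hTinv
  have hleft : ∀ y, Tinv (T y) = y := by
    intro y
    funext i
    rw [hTinv, hT]
    unfold tmap
    simp only [IsometryEquiv.symm_apply_apply, ContinuousLinearEquiv.apply_symm_apply]
    have := (hh i).ne'
    field_simp
    ring
  have hright : ∀ p, T (Tinv p) = p := by
    intro p
    rw [hT, hTinv]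
    unfold tmap
    have h1 : (fun i => c i + hl i *
        ((((EuclideanSpace.equiv (Fin n) ℝ) (f.symm p)) i - c i)/hl i))
        = fun i => ((EuclideanSpace.equiv (Fin n) ℝ) (f.symm p)) i := by
      funext i
      have := (hh i).ne'
      field_simp
      ring
    rw [h1]
    have h2 : (EuclideanSpace.equiv (Fin n) ℝ).symm
        (fun i => ((EuclideanSpace.equiv (Fin n) ℝ) (f.symm p)) i) = f.symm p := by
      ext i
      rfl
    rw [h2, IsometryEquiv.apply_symm_apply]
  have hcontTinv : Continuous Tinv := by
    simp only [hTinv]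
    refine continuous_pi fun i => Continuous.div_const (Continuous.sub ?_ continuous_const) _
    exact (continuous_apply i).comp
      ((EuclideanSpace.equiv (Fin n) ℝ).continuous.comp f.symm.continuous)
  set Thom : Homeomorph (Fin n → ℝ) (EuclideanSpace ℝ (Fin n)) :=
    { toFun := T, invFun := Tinv, left_inv := hleft, right_inv := hright,
      continuous_toFun := hcontT,
      continuous_invFun := hcontTinv } with hThom
  set ν : Measure (Fin n → ℝ) := Measure.map (⇑Thom.symm) μ with hν
  have hTsurj : Function.Surjective T := fun p => ⟨Tinv p, hright p⟩
  have hνA : ∀ {A : Set (Fin n → ℝ)}, MeasurableSet A → ν A = μ (T '' A) := by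
    intro A hA
    rw [hν, Measure.map_apply Thom.symm.measurable hA]
    congr 1
    have hsymm : ⇑Thom.symm = Tinv := rfl
    rw [hsymm]
    ext p
    constructor
    · intro hp
      exact ⟨Tinv p, hp, hright p⟩
    · rintro ⟨q, hq, rfl⟩
      rw [Set.mem_preimage, hleft q]
      exact hq
  haveI hνloc : IsLocallyFiniteMeasure ν := by
    constructor
    intro p
    refine ⟨Metric.ball p 1, Metric.ball_mem_nhds p one_pos, ?_⟩
    rw [hνA Metric.isOpen_ball.measurableSet]
    calc μ (T '' Metric.ball p 1) ≤ μ (T '' Metric.closedBall p 1) :=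
          measure_mono (Set.image_mono Metric.ball_subset_closedBall)
      _ < ⊤ := ((isCompact_closedBall p 1).image hcontT).measure_lt_top
  have hνdb : ∀ (z : Fin n → ℝ) (s : ℝ), 0 < s →
      ν (Metric.ball z (2*s)) ≤ ENNReal.ofReal Δ * ν (Metric.ball z s) := by
    intro z s hs
    rw [hνA Metric.isOpen_ball.measurableSet, hνA Metric.isOpen_ball.measurableSet]
    exact hTdb z hs
  have hν0 : ν ≠ 0 := by
    intro h0
    have h1 : ν Set.univ = μ (T '' Set.univ) := hνA MeasurableSet.univ
    rw [Set.image_univ, Set.range_eq_univ.mpr hTsurj] at h1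
    rw [h0] at h1
    simp only [Measure.coe_zero, Pi.zero_apply] at h1
    have : μ R = 0 := le_antisymm (h1 ▸ measure_mono (Set.subset_univ R)) zero_le
    exact absurd this hRpos.ne'
  have hballpos : ∀ (z : Fin n → ℝ) {s : ℝ}, 0 < s → 0 < ν (Metric.ball z s) :=
    fun z s hs => cube_pos ν hν0 hνdb z hs
  have hballfin : ∀ (z : Fin n → ℝ) (s : ℝ), ν (Metric.closedBall z s) ≠ ⊤ :=
    fun z s => (isCompact_closedBall z s).measure_lt_top.ne
  have hμTpos : ∀ (z : Fin n → ℝ) {s : ℝ}, 0 < s → 0 < μ (T '' Metric.ball z s) := by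
    intro z s hs
    rw [← hνA Metric.isOpen_ball.measurableSet]
    exact hballpos z hs
  have hμTfin : ∀ (z : Fin n → ℝ) (s : ℝ), μ (T '' Metric.ball z s) ≠ ⊤ := by
    intro z s
    rw [← hνA Metric.isOpen_ball.measurableSet]
    refine ne_top_of_le_ne_top (hballfin z s) (measure_mono Metric.ball_subset_closedBall)
  -- ## measurability facts
  have hRopen : IsOpen R := isRect_isOpen (hG R hR)
  have hRmeas : MeasurableSet R := hRopen.measurableSet
  set K : Set (Fin n → ℝ) := T ⁻¹' (E ∩ R) with hK
  have hKmeas : MeasurableSet K := (hE.inter hRmeas).preimage hcontT.measurable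
  have hKcorr : ∀ {bs : Set (Fin n → ℝ)}, MeasurableSet bs →
      ν (K ∩ bs) = μ ((E ∩ R) ∩ T '' bs) := by
    intro bs hbs
    rw [hνA (hKmeas.inter hbs)]
    congr 1
    rw [hK, Set.inter_comm, Set.image_inter_preimage, Set.inter_comm]
  have hνK : ν K = μ (E ∩ R) := by
    rw [hνA hKmeas]
    congr 1
    exact Set.image_preimage_eq (E ∩ R) hTsurj
  have hERpos : 0 < μ (E ∩ R) := by
    rw [hratio]
    exact ENNReal.mul_pos (ENNReal.ofReal_pos.2 hα.1).ne' hRpos.ne'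
  -- ## a density point
  have hbes := Besicovitch.ae_tendsto_measure_inter_div ν K
  have hres : ∀ᵐ p ∂ν.restrict K, p ∈ K := ae_restrict_mem hKmeas
  haveI hne : (ae (ν.restrict K)).NeBot := by
    refine ae_neBot.2 ?_
    intro h0
    have : ν K = 0 := by
      rw [← Measure.restrict_apply_univ, h0]
      simp
    rw [hνK] at this
    exact absurd this hERpos.ne'
  obtain ⟨x, hxtends, hxK⟩ := (hbes.and hres).exists
  set β₁ : ℝ := (1+β)/2 with hβ₁def
  have hβ₁β : β < β₁ := by rw [hβ₁def]; linarith
  have hβ₁1 : β₁ < 1 := by rw [hβ₁def]; linarith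
  have hβ₁lt : ENNReal.ofReal β₁ < 1 := ENNReal.ofReal_lt_one.2 hβ₁1
  have hev : ∀ᶠ r in nhdsWithin 0 (Set.Ioi 0),
      ENNReal.ofReal β₁ < ν (K ∩ Metric.closedBall x r) / ν (Metric.closedBall x r) :=
    hxtends (Ioi_mem_nhds hβ₁lt)
  obtain ⟨ε, hε, hεP⟩ := Metric.mem_nhdsWithin_iff.1 hev
  have hcb : ∀ r : ℝ, 0 < r → r < ε →
      ENNReal.ofReal β₁ * ν (Metric.closedBall x r) ≤ ν (K ∩ Metric.closedBall x r) := by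
    intro r hr hrε
    have hP : ENNReal.ofReal β₁ <
        ν (K ∩ Metric.closedBall x r) / ν (Metric.closedBall x r) := by
      refine hεP ⟨?_, hr⟩
      rw [Metric.mem_ball, Real.dist_eq, sub_zero, abs_of_pos hr]
      exact hrε
    have hb0 : ν (Metric.closedBall x r) ≠ 0 :=
      (lt_of_lt_of_le (hballpos x hr) (measure_mono Metric.ball_subset_closedBall)).ne'
    exact (ENNReal.le_div_iff_mul_le (Or.inl hb0) (Or.inl (hballfin x r))).1 hP.le
  set r₁ : ℝ := min (ε/2) 1 with hr₁def
  have hr₁0 : 0 < r₁ := lt_min (by linarith) one_pos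
  have hr₁ε : r₁ < ε := lt_of_le_of_lt (min_le_left _ _) (by linarith)
  have hr₁1 : r₁ ≤ 1 := min_le_right _ _
  -- open ball density at r₁
  have hstart : ENNReal.ofReal β * ν (Metric.ball x r₁) ≤ ν (K ∩ Metric.ball x r₁) := by
    set u : ℕ → ℝ := fun k => r₁ - r₁/(k+2) with hu
    have hu0 : ∀ k, 0 < u k := by
      intro k
      rw [hu]
      have h1 : r₁/(k+2) < r₁ := by
        rw [div_lt_iff₀ (by positivity)]
        nlinarith [Nat.cast_nonneg (α := ℝ) k, hr₁0]
      simpa using h1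
    have huε : ∀ k, u k < ε := by
      intro k
      have : u k < r₁ := by
        rw [hu]
        have : (0:ℝ) < r₁/(k+2) := by positivity
        linarith
      linarith
    have humono : Monotone u := by
      intro k k' hkk'
      rw [hu]
      have h1 : r₁/((k':ℝ)+2) ≤ r₁/((k:ℝ)+2) := by
        apply div_le_div_of_nonneg_left hr₁0.le (by positivity)
        have : (k:ℝ) ≤ k' := by exact_mod_cast hkk'
        linarith
      simp only
      linarith
    have hcup : Metric.ball x r₁ = ⋃ k : ℕ, Metric.closedBall x (u k) := by
      ext p
      simp only [Metric.mem_ball, Set.mem_iUnion, Metric.mem_closedBall]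
      constructor
      · intro hp
        obtain ⟨k, hk⟩ := exists_nat_gt (r₁/(r₁ - dist p x))
        refine ⟨k, ?_⟩
        have hd : 0 < r₁ - dist p x := by linarith
        have h2 : r₁/(k+2) < r₁ - dist p x := by
          rw [div_lt_iff₀ (by positivity)]
          rw [div_lt_iff₀ hd] at hk
          nlinarith [dist_nonneg (x := p) (y := x)]
        rw [hu]
        simp only
        linarith
      · rintro ⟨k, hk⟩
        have := hu0 k
        have h3 : u k < r₁ := by
          rw [hu]; have : (0:ℝ) < r₁/(k+2) := by positivity
          simp only; linarith
        linarith
    have hmono1 : Monotone (fun k : ℕ => Metric.closedBall x (u k)) :=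
      fun k k' hkk' => Metric.closedBall_subset_closedBall (humono hkk')
    have hmono2 : Monotone (fun k : ℕ => K ∩ Metric.closedBall x (u k)) :=
      fun k k' hkk' => Set.inter_subset_inter le_rfl (hmono1 hkk')
    have he1 : ν (Metric.ball x r₁) = ⨆ k, ν (Metric.closedBall x (u k)) := by
      rw [hcup]
      exact hmono1.measure_iUnion
    have he2 : ν (K ∩ Metric.ball x r₁) = ⨆ k, ν (K ∩ Metric.closedBall x (u k)) := by
      rw [hcup, Set.inter_iUnion]
      exact hmono2.measure_iUnion
    calc ENNReal.ofReal β * ν (Metric.ball x r₁)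
        = ⨆ k, ENNReal.ofReal β * ν (Metric.closedBall x (u k)) := by
          rw [he1, ENNReal.mul_iSup]
      _ ≤ ⨆ k, ν (K ∩ Metric.closedBall x (u k)) := by
          refine iSup_mono fun k => ?_
          refine le_trans (mul_le_mul_left ?_ _) (hcb (u k) (hu0 k) (huε k))
          exact ENNReal.ofReal_le_ofReal hβ₁β.le
      _ = ν (K ∩ Metric.ball x r₁) := he2.symm
  -- x lies in the unit ball
  have hTinj : Function.Injective T := fun p q hpq => by
    rw [← hleft p, hpq, hleft q]
  have hx1 : x ∈ Metric.ball (0 : Fin n → ℝ) 1 := by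
    have hTx : T x ∈ E ∩ R := hxK
    have : T x ∈ T '' Metric.ball 0 1 := hTR.symm ▸ hTx.2
    obtain ⟨y, hy, hyx⟩ := this
    have : y = x := hTinj hyx
    rwa [← this]
  have hball01 : Metric.ball (0 : Fin n → ℝ) 1 ⊆ Metric.ball x 2 := by
    intro p hp
    rw [Metric.mem_ball] at hp ⊢
    have h1 : dist p x ≤ dist p 0 + dist 0 x := dist_triangle _ _ _
    have h2 : dist (0 : Fin n → ℝ) x < 1 := by rw [dist_comm]; exact hx1
    linarith
  have hr₁2 : r₁ ≤ 2 := by linarith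
  -- ## continuity of the ball measure function
  haveI : IsFiniteMeasureOnCompacts ν := isFiniteMeasureOnCompacts_of_isLocallyFiniteMeasure
  set g : ℝ → ℝ≥0∞ := fun s => ν (Metric.ball x s) with hg
  have hsph : ∀ s : ℝ, 0 < s → ν (Metric.sphere x s) = 0 :=
    fun s hs => sphere_null ν ENNReal.ofReal_ne_top hνdb x hs
  have hgcl : ∀ s : ℝ, 0 < s → ν (Metric.closedBall x s) = g s := by
    intro s hs
    rw [hg]
    rw [← Metric.ball_union_sphere]
    refine le_antisymm ?_ (measure_mono Set.subset_union_left)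
    calc ν (Metric.ball x s ∪ Metric.sphere x s)
        ≤ ν (Metric.ball x s) + ν (Metric.sphere x s) := measure_union_le _ _
      _ = ν (Metric.ball x s) := by rw [hsph s hs, add_zero]
  have hgmono : Monotone g := fun s s' hss' =>
    measure_mono (Metric.ball_subset_ball hss')
  have hgfin : ∀ s : ℝ, g s ≠ ⊤ := by
    intro s
    refine ne_top_of_le_ne_top (hballfin x s) (measure_mono Metric.ball_subset_closedBall)
  have hgcont : ∀ s₀ : ℝ, 0 < s₀ → ContinuousAt g s₀ := by
    intro s₀ hs₀
    rw [ContinuousAt]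
    refine tendsto_order.2 ⟨?_, ?_⟩
    · intro l hl
      set u : ℕ → ℝ := fun k => s₀ - s₀/(k+2) with hu
      have hu0 : ∀ k, 0 < u k := by
        intro k
        rw [hu]
        have h1 : s₀/(k+2) < s₀ := by
          rw [div_lt_iff₀ (by positivity)]
          nlinarith [Nat.cast_nonneg (α := ℝ) k]
        simpa using h1
      have huls : ∀ k, u k < s₀ := by
        intro k
        rw [hu]
        have : (0:ℝ) < s₀/(k+2) := by positivity
        simp only
        linarith
      have hcup : Metric.ball x s₀ = ⋃ k : ℕ, Metric.closedBall x (u k) := by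
        ext p
        simp only [Metric.mem_ball, Set.mem_iUnion, Metric.mem_closedBall]
        constructor
        · intro hp
          obtain ⟨k, hk⟩ := exists_nat_gt (s₀/(s₀ - dist p x))
          refine ⟨k, ?_⟩
          have hd : 0 < s₀ - dist p x := by linarith
          have h2 : s₀/(k+2) < s₀ - dist p x := by
            rw [div_lt_iff₀ (by positivity)]
            rw [div_lt_iff₀ hd] at hk
            nlinarith [dist_nonneg (x := p) (y := x)]
          rw [hu]
          simp only
          linarith
        · rintro ⟨k, hk⟩
          exact lt_of_le_of_lt hk (huls k)
      have hmono1 : Monotone (fun k : ℕ => Metric.closedBall x (u k)) := by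
        intro k k' hkk'
        refine Metric.closedBall_subset_closedBall ?_
        rw [hu]
        have h1 : s₀/((k':ℝ)+2) ≤ s₀/((k:ℝ)+2) := by
          apply div_le_div_of_nonneg_left hs₀.le (by positivity)
          have : (k:ℝ) ≤ k' := by exact_mod_cast hkk'
          linarith
        simp only
        linarith
      have he1 : g s₀ = ⨆ k, ν (Metric.closedBall x (u k)) := by
        rw [hg]
        simp only
        rw [hcup]
        exact hmono1.measure_iUnion
      rw [he1] at hl
      rw [lt_iSup_iff] at hl
      obtain ⟨k, hk⟩ := hl
      filter_upwards [Ioi_mem_nhds (huls k)] with s hs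
      exact lt_of_lt_of_le hk (measure_mono (Metric.closedBall_subset_ball hs))
    · intro q hq
      have hcbq : ν (Metric.closedBall x s₀) < q := by
        rw [hgcl s₀ hs₀]
        exact hq
      have hcap : Metric.closedBall x s₀ = ⋂ k : ℕ, Metric.ball x (s₀ + 1/(k+1)) := by
        ext p
        simp only [Metric.mem_closedBall, Set.mem_iInter, Metric.mem_ball]
        constructor
        · intro hp k
          have : (0:ℝ) < 1/(k+1) := by positivity
          linarith
        · intro hp
          by_contra hcon
          push_neg at hcon
          obtain ⟨k, hk⟩ := exists_nat_one_div_lt (show (0:ℝ) < dist p x - s₀ by linarith)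
          have := hp k
          linarith
      have hanti : Antitone (fun k : ℕ => Metric.ball x (s₀ + 1/(k+1))) := by
        intro k k' hkk'
        refine Metric.ball_subset_ball ?_
        have h1 : 1/((k':ℝ)+1) ≤ 1/((k:ℝ)+1) := by
          apply div_le_div_of_nonneg_left one_pos.le (by positivity)
          have : (k:ℝ) ≤ k' := by exact_mod_cast hkk'
          linarith
        linarith
      have hfin0 : ν (Metric.ball x (s₀ + 1/((0:ℕ)+1))) ≠ ⊤ := hgfin _
      have hiInf := tendsto_measure_iInter_atTop
        (fun k => Metric.isOpen_ball.measurableSet.nullMeasurableSet) hanti ⟨0, hfin0⟩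
      rw [← hcap] at hiInf
      have hevq : ∀ᶠ k in atTop,
          ν (Metric.ball x (s₀ + 1/((k:ℕ)+1))) < q := by
        exact hiInf.eventually_lt_const hcbq
      obtain ⟨k, hk⟩ := hevq.exists
      have hlt : s₀ < s₀ + 1/((k:ℝ)+1) := by
        have : (0:ℝ) < 1/((k:ℝ)+1) := by positivity
        linarith
      filter_upwards [Iio_mem_nhds hlt] with s hs
      exact lt_of_le_of_lt (measure_mono (Metric.ball_subset_ball hs.le)) hk
  have hgcontOn : ∀ t : ℝ, r₁ ≤ t → ContinuousOn g (Set.Icc t 2) := by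
    intro t ht
    refine continuousOn_of_forall_continuousAt fun s hs => hgcont s ?_
    exact lt_of_lt_of_le hr₁0 (le_trans ht hs.1)
  -- ## choice of N
  have hb1 : (1:ℝ) < 1/β := by
    rw [lt_div_iff₀ hβ0]
    linarith
  have hγ0 : 0 < g r₁ := hballpos x hr₁0
  have hγfin : g r₁ ≠ ⊤ := hgfin r₁
  have hΛfin : g 2 ≠ ⊤ := hgfin 2
  obtain ⟨N, hN⟩ := pow_unbounded_of_one_lt (max Δ ((g 2).toReal / (g r₁).toReal)) hb1
  have hC1 : Δ ≤ β ^ (-((N:ℤ) + 1)) := by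
    have h1 : Δ < (1/β)^N := lt_of_le_of_lt (le_max_left _ _) hN
    have h2 : ((1:ℝ)/β)^N ≤ (1/β)^(N+1) := by
      apply pow_le_pow_right₀ hb1.le
      omega
    have h3 : β ^ (-((N:ℤ) + 1)) = (1/β)^(N+1) := by
      rw [show -((N:ℤ)+1) = -((N+1 : ℕ) : ℤ) by push_cast; ring]
      rw [zpow_neg, zpow_natCast, ← inv_pow, one_div]
    rw [h3]
    linarith
  have hC2 : g 2 ≤ (ENNReal.ofReal (1/β))^N * g r₁ := by
    have h1 : (g 2).toReal / (g r₁).toReal < (1/β)^N :=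
      lt_of_le_of_lt (le_max_right _ _) hN
    have h2 : (g 2).toReal ≤ (1/β)^N * (g r₁).toReal := by
      rw [div_lt_iff₀ (ENNReal.toReal_pos hγ0.ne' hγfin)] at h1
      linarith
    calc g 2 = ENNReal.ofReal (g 2).toReal := (ENNReal.ofReal_toReal hΛfin).symm
      _ ≤ ENNReal.ofReal ((1/β)^N * (g r₁).toReal) := ENNReal.ofReal_le_ofReal h2
      _ = ENNReal.ofReal ((1/β)^N) * ENNReal.ofReal ((g r₁).toReal) := by
          rw [ENNReal.ofReal_mul (by positivity)]
      _ = (ENNReal.ofReal (1/β))^N * g r₁ := by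
          rw [ENNReal.ofReal_pow (by positivity), ENNReal.ofReal_toReal hγfin]
  -- ## measurability of the iterated halo sets
  have hHmeas : ∀ k, MeasurableSet (Hiter μ 𝔊 β E k) := Hiter_measurable hG hE
  -- ## the chain
  have hβinv1 : (1:ℝ≥0∞) ≤ ENNReal.ofReal (1/β) := by
    rw [ENNReal.one_le_ofReal]
    exact hb1.le
  have hββinv : ENNReal.ofReal β * ENNReal.ofReal (1/β) = 1 := by
    rw [← ENNReal.ofReal_mul hβ0.le]
    rw [mul_one_div_cancel hβ0.ne']
    exact ENNReal.ofReal_one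
  have hβle1 : ENNReal.ofReal β ≤ 1 := ENNReal.ofReal_le_one.2 hβ1.le
  have chain : ∀ j : ℕ, ∃ t, r₁ ≤ t ∧ t ≤ 2 ∧
      g t = min ((ENNReal.ofReal (1/β))^j * g r₁) (g 2) ∧
      T '' Metric.ball x t ⊆ Hiter μ 𝔊 β E (j+1) := by
    intro j
    induction j with
    | zero =>
      refine ⟨r₁, le_rfl, hr₁2, ?_, ?_⟩
      · rw [pow_zero, one_mul]
        exact (min_eq_left (hgmono hr₁2)).symm
      · intro p hp
        refine mem_Hiter_succ (k := 0) hG hE (hT𝔊 x hr₁0) (hμTpos x hr₁0)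
          (hμTfin x r₁) (Set.inter_subset_left : E ∩ R ⊆ Hiter μ 𝔊 β E 0) ?_ hp
        have h1 : ν (K ∩ Metric.ball x r₁) = μ ((E ∩ R) ∩ T '' Metric.ball x r₁) :=
          hKcorr Metric.isOpen_ball.measurableSet
        have h2 : ν (Metric.ball x r₁) = μ (T '' Metric.ball x r₁) :=
          hνA Metric.isOpen_ball.measurableSet
        rw [← h1, ← h2]
        exact hstart
    | succ j ih =>
      obtain ⟨t, htr, ht2, hgt, hsub⟩ := ih
      set w : ℝ≥0∞ := min ((ENNReal.ofReal (1/β))^(j+1) * g r₁) (g 2) with hw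
      have hcc : (ENNReal.ofReal (1/β))^j ≤ (ENNReal.ofReal (1/β))^(j+1) := by
        rw [pow_succ]
        exact le_mul_of_one_le_right' hβinv1
      have hw1 : g t ≤ w := by
        rw [hgt, hw]
        exact min_le_min (mul_le_mul_left hcc _) le_rfl
      have hw2 : w ≤ g 2 := min_le_right _ _
      have hivt := intermediate_value_Icc ht2 (hgcontOn t htr)
      obtain ⟨t', ht'mem, hgt'⟩ := hivt ⟨hw1, hw2⟩
      refine ⟨t', le_trans htr ht'mem.1, ht'mem.2, hgt', ?_⟩
      intro p hp
      have ht'pos : 0 < t' := lt_of_lt_of_le hr₁0 (le_trans htr ht'mem.1)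
      refine mem_Hiter_succ (k := j+1) hG hE (hT𝔊 x ht'pos) (hμTpos x ht'pos)
        (hμTfin x t') hsub ?_ hp
      have hAB : T '' Metric.ball x t ⊆ T '' Metric.ball x t' :=
        Set.image_mono (Metric.ball_subset_ball ht'mem.1)
      have h3 : μ (T '' Metric.ball x t ∩ T '' Metric.ball x t') = g t := by
        rw [Set.inter_eq_self_of_subset_left hAB]
        rw [← hνA Metric.isOpen_ball.measurableSet]
      rw [h3]
      have h4 : μ (T '' Metric.ball x t') = g t' := by
        rw [← hνA Metric.isOpen_ball.measurableSet]
      rw [h4, hgt', hgt, hw]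
      refine le_min ?_ ?_
      · calc ENNReal.ofReal β * min ((ENNReal.ofReal (1/β))^(j+1) * g r₁) (g 2)
            ≤ ENNReal.ofReal β * ((ENNReal.ofReal (1/β))^(j+1) * g r₁) :=
              mul_le_mul_right (min_le_left _ _) _
          _ = (ENNReal.ofReal (1/β))^j * g r₁ := by
              rw [pow_succ]
              calc ENNReal.ofReal β * ((ENNReal.ofReal (1/β))^j * ENNReal.ofReal (1/β) * g r₁)
                  = (ENNReal.ofReal β * ENNReal.ofReal (1/β)) *
                    ((ENNReal.ofReal (1/β))^j * g r₁) := by ring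
                _ = (ENNReal.ofReal (1/β))^j * g r₁ := by rw [hββinv, one_mul]
      · calc ENNReal.ofReal β * min ((ENNReal.ofReal (1/β))^(j+1) * g r₁) (g 2)
            ≤ 1 * g 2 := mul_le_mul' hβle1 (min_le_right _ _)
          _ = g 2 := one_mul _
  -- ## final step: R is inside the (N+2)-th halo
  obtain ⟨t, htr, ht2, hgt, hsub⟩ := chain N
  have hfinal : T '' Metric.ball x 2 ⊆ Hiter μ 𝔊 β E (N+2) := by
    intro p hp
    refine mem_Hiter_succ (k := N+1) hG hE (hT𝔊 x two_pos) (hμTpos x two_pos)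
      (hμTfin x 2) hsub ?_ hp
    have hAB : T '' Metric.ball x t ⊆ T '' Metric.ball x 2 :=
      Set.image_mono (Metric.ball_subset_ball ht2)
    have h3 : μ (T '' Metric.ball x t ∩ T '' Metric.ball x 2) = g t := by
      rw [Set.inter_eq_self_of_subset_left hAB]
      rw [← hνA Metric.isOpen_ball.measurableSet]
    have h4 : μ (T '' Metric.ball x 2) = g 2 := by
      rw [← hνA Metric.isOpen_ball.measurableSet]
    rw [h3, h4, hgt]
    refine le_min ?_ ?_
    · refine le_trans (mul_le_mul' hβle1 hC2) ?_
      rw [one_mul]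
    · refine le_trans (mul_le_mul' hβle1 (le_refl (g 2))) ?_
      rw [one_mul]
  have hRsub : R ⊆ Hiter μ 𝔊 β E (N+2) := by
    rw [← hTR]
    exact le_trans (Set.image_mono hball01) hfinal
  -- ## conclusion
  refine ⟨N, hC1, ?_⟩
  have h5 : μ (R ∩ Hiter μ 𝔊 β E (N+2)) = μ R := by
    rw [Set.inter_eq_self_of_subset_left hRsub]
  rw [h5, hratio, ← mul_assoc, ← ENNReal.ofReal_mul (by positivity)]
  calc ENNReal.ofReal (1/β * α) * μ R ≤ 1 * μ R := by
        refine mul_le_mul_left ?_ _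
        rw [ENNReal.ofReal_le_one]
        rw [one_div, inv_mul_le_iff₀ hβ0, mul_one]
        exact hα.2.le
    _ = μ R := one_mul _
end

section
/- Let μ be a nonzero locally finite nonnegative Borel measure on ℝⁿ which is doubling with respect to the family 𝔎 of all homothetic copies of a fixed rectangle R₀. Then for every convex set B ⊆ ℝⁿ, the boundary ∂B = closure(B) \ interior(B) satisfies μ(∂B) = 0. -/
open MeasureTheory Set Filter
open scoped ENNReal Topology Pointwise

section Auxiliary

open Metric

private lemma rect_struct {n : ℕ} {R₀ : Set (EuclideanSpace ℝ (Fin n))} (h : IsRect R₀) :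
    ∃ (c : EuclideanSpace ℝ (Fin n)) (ρ P : ℝ), 0 < ρ ∧ 0 < P ∧ Convex ℝ R₀ ∧
      closedBall c ρ ⊆ R₀ ∧ R₀ ⊆ closedBall c P := by
  obtain ⟨f, S, ⟨a, b, hab, rfl⟩, rfl⟩ := h
  set S : Set (EuclideanSpace ℝ (Fin n)) := {x | ∀ i, x i ∈ Set.Ioo (a i) (b i)} with hS
  have hSeq : S = ⋂ i, (EuclideanSpace.proj (𝕜 := ℝ) i) ⁻¹' (Set.Ioo (a i) (b i)) := by
    ext x; simp [hS]
  have hopen : IsOpen S := by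
    rw [hSeq]
    exact isOpen_iInter_of_finite fun i =>
      (isOpen_Ioo).preimage (EuclideanSpace.proj i).continuous
  have hconvS : Convex ℝ S := by
    rw [hSeq]
    exact convex_iInter fun i => (convex_Ioo _ _).linear_preimage
      ((EuclideanSpace.proj (𝕜 := ℝ) i).toLinearMap)
  set m : EuclideanSpace ℝ (Fin n) := (WithLp.equiv 2 (Fin n → ℝ)).symm
    (fun i => (a i + b i) / 2) with hm
  have hmS : m ∈ S := by
    intro i
    have : m i = (a i + b i) / 2 := rfl
    rw [this]
    constructor <;> [skip; skip] <;> nlinarith [hab i]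
  -- inner ball
  obtain ⟨ε, hε, hball⟩ := Metric.isOpen_iff.1 hopen m hmS
  -- outer ball
  set P : ℝ := Real.sqrt (∑ i, (b i - a i) ^ 2) + 1 with hPdef
  have hPpos : 0 < P := by positivity
  have houter : S ⊆ closedBall m P := by
    intro x hx
    have hd : dist x m ≤ Real.sqrt (∑ i, (b i - a i) ^ 2) := by
      rw [EuclideanSpace.dist_eq]
      apply Real.sqrt_le_sqrt
      apply Finset.sum_le_sum
      intro i _
      have h1 := (hx i).1
      have h2 := (hx i).2
      have hmi : m i = (a i + b i) / 2 := rfl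
      have hdi : dist (x i) (m i) ≤ b i - a i := by
        rw [Real.dist_eq, hmi, abs_le]
        constructor <;> nlinarith [hab i]
      nlinarith [dist_nonneg (x := x i) (y := m i)]
    rw [mem_closedBall]
    linarith
  refine ⟨f m, ε / 2, P, by linarith, hPpos, ?_, ?_, ?_⟩
  · have : Convex ℝ (⇑(f.toRealAffineIsometryEquiv.toAffineIsometry.toAffineMap) '' S) :=
      hconvS.affine_image _
    convert this using 2
    rfl
  · rw [← f.image_closedBall]
    exact Set.image_mono (le_trans (closedBall_subset_ball (by linarith)) hball)
  · rw [← f.image_closedBall]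
    exact Set.image_mono houter

private lemma ball_doubling {n : ℕ} {R₀ : Set (EuclideanSpace ℝ (Fin n))}
    {μ : Measure (EuclideanSpace ℝ (Fin n))} {δ : ℝ}
    (hconv : Convex ℝ R₀) {c : EuclideanSpace ℝ (Fin n)} {ρ P : ℝ}
    (hρ : 0 < ρ) (hP : 0 < P) (hin : closedBall c ρ ⊆ R₀)
    (hout : R₀ ⊆ closedBall c P)
    (hdbl : DoublingWrt μ (homCopies R₀) δ) :
    ∀ (y : EuclideanSpace ℝ (Fin n)) (s : ℝ) (k : ℕ), 0 < s →
      μ (closedBall y (2 ^ k * s * ρ)) ≤ (ENNReal.ofReal δ) ^ k * μ (closedBall y (s * P)) := by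
  classical
  -- the translated-dilated rectangle centered (roughly) at y with scale s
  set Rs : EuclideanSpace ℝ (Fin n) → ℝ → Set (EuclideanSpace ℝ (Fin n)) :=
    fun y s => (y - s • c) +ᵥ s • R₀ with hRs
  have hmem : ∀ y s x, 0 < s → (x ∈ Rs y s ↔ ∃ t ∈ R₀, x = y - s • c + s • t) := by
    intro y s x hs
    simp only [hRs, Set.mem_vadd_set, Set.mem_smul_set]
    constructor
    · rintro ⟨-, ⟨t, ht, rfl⟩, rfl⟩; exact ⟨t, ht, by simp only [vadd_eq_add]; try module⟩
    · rintro ⟨t, ht, rfl⟩; exact ⟨s • t, ⟨t, ht, rfl⟩, by simp only [vadd_eq_add]; try module⟩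
  have hballin : ∀ y s, 0 < s → closedBall y (s * ρ) ⊆ Rs y s := by
    intro y s hs x hx
    rw [hmem y s x hs]
    refine ⟨c + s⁻¹ • (x - y), hin ?_, ?_⟩
    · rw [mem_closedBall, dist_eq_norm]
      have h1 : c + s⁻¹ • (x - y) - c = s⁻¹ • (x - y) := by abel
      rw [h1, norm_smul, Real.norm_eq_abs, abs_of_pos (inv_pos.2 hs), inv_mul_le_iff₀ hs]
      rw [mem_closedBall, dist_eq_norm] at hx
      linarith
    · rw [smul_add, smul_inv_smul₀ (ne_of_gt hs)]
      abel
  have hballout : ∀ y s, 0 < s → Rs y s ⊆ closedBall y (s * P) := by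
    intro y s hs x hx
    rw [hmem y s x hs] at hx
    obtain ⟨t, ht, rfl⟩ := hx
    have := hout ht
    rw [mem_closedBall] at this ⊢
    have : dist (y - s • c + s • t) y = s * dist t c := by
      rw [dist_eq_norm, dist_eq_norm]
      have : y - s • c + s • t - y = s • (t - c) := by
        rw [smul_sub]; abel
      rw [this, norm_smul, Real.norm_eq_abs, abs_of_pos hs]
    rw [this]
    have := hout ht
    rw [mem_closedBall] at this
    exact mul_le_mul_of_nonneg_left this hs.le
  have hhom : ∀ y s, 0 < s → Rs y s ∈ homCopies R₀ := fun y s hs => ⟨y - s • c, s, hs, rfl⟩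
  have hconvRs : ∀ y s, 0 < s → Convex ℝ (Rs y s) := by
    intro y s hs
    exact (hconv.smul s).vadd _
  -- the doubling step
  have hstep : ∀ y s, 0 < s → μ (Rs y (2 * s)) ≤ ENNReal.ofReal δ * μ (Rs y s) := by
    intro y s hs
    have hset : (-y) +ᵥ (2 : ℝ) • Rs y s = Rs y (2 * s) := by
      ext x
      simp only [Set.mem_vadd_set, Set.mem_smul_set]
      constructor
      · rintro ⟨-, ⟨u, hu, rfl⟩, rfl⟩
        rw [hmem y s u hs] at hu
        obtain ⟨t, ht, rfl⟩ := hu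
        rw [hmem y (2 * s) _ (by linarith)]
        refine ⟨t, ht, ?_⟩
        simp only [vadd_eq_add]
        module
      · intro hx
        rw [hmem y (2 * s) x (by linarith)] at hx
        obtain ⟨t, ht, rfl⟩ := hx
        refine ⟨(2:ℝ) • (y - s • c + s • t), ⟨y - s • c + s • t, (hmem y s _ hs).2 ⟨t, ht, rfl⟩, rfl⟩, ?_⟩
        simp only [vadd_eq_add]
        module
    have hsub : Rs y s ⊆ (-y) +ᵥ (2 : ℝ) • Rs y s := by
      intro u hu
      have hy : y ∈ Rs y s := hballin y s hs (mem_closedBall_self (by positivity))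
      have hmid : (1/2 : ℝ) • u + (1/2 : ℝ) • y ∈ Rs y s :=
        (hconvRs y s hs) hu hy (by norm_num) (by norm_num) (by norm_num)
      refine ⟨(2:ℝ) • ((1/2 : ℝ) • u + (1/2 : ℝ) • y), ⟨_, hmid, rfl⟩, ?_⟩
      simp only [vadd_eq_add]
      module
    have := hdbl (Rs y s) (hhom y s hs) (-y) hsub
    rwa [hset] at this
  -- iterate
  have hiter : ∀ y s (k : ℕ), 0 < s → μ (Rs y (2 ^ k * s)) ≤ (ENNReal.ofReal δ) ^ k * μ (Rs y s) := by
    intro y s k hs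
    induction k with
    | zero => simp
    | succ k ih =>
      have h1 : (2:ℝ) ^ (k+1) * s = 2 * (2 ^ k * s) := by ring
      rw [h1]
      calc μ (Rs y (2 * (2 ^ k * s))) ≤ ENNReal.ofReal δ * μ (Rs y (2 ^ k * s)) :=
            hstep y _ (by positivity)
        _ ≤ ENNReal.ofReal δ * ((ENNReal.ofReal δ) ^ k * μ (Rs y s)) :=
            mul_le_mul_right ih _
        _ = (ENNReal.ofReal δ) ^ (k+1) * μ (Rs y s) := by ring
  intro y s k hs
  calc μ (closedBall y (2 ^ k * s * ρ)) ≤ μ (Rs y (2 ^ k * s)) :=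
        measure_mono (hballin y (2 ^ k * s) (by positivity))
    _ ≤ (ENNReal.ofReal δ) ^ k * μ (Rs y s) := hiter y s k hs
    _ ≤ (ENNReal.ofReal δ) ^ k * μ (closedBall y (s * P)) :=
        mul_le_mul_right (measure_mono (hballout y s hs)) _

private lemma convex_interior_closure {n : ℕ} {B : Set (EuclideanSpace ℝ (Fin n))}
    (hB : Convex ℝ B) : interior (closure B) ⊆ interior B := by
  rcases eq_empty_or_nonempty (interior B) with hint | ⟨x0, hx0⟩
  · -- interior B empty: affine span is not top, closure lies in a proper closed affine subspace
    intro z hz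
    exfalso
    have h1 : affineSpan ℝ B ≠ ⊤ := by
      intro htop
      rw [← hB.interior_nonempty_iff_affineSpan_eq_top] at htop
      exact htop.ne_empty hint
    have hsub : closure B ⊆ (affineSpan ℝ B : Set (EuclideanSpace ℝ (Fin n))) :=
      closure_minimal (subset_affineSpan ℝ B) (affineSpan ℝ B).closed_of_finiteDimensional
    have h2 : affineSpan ℝ (closure B) ≤ affineSpan ℝ B := affineSpan_le.2 hsub
    have h3 : affineSpan ℝ (closure B) = ⊤ :=
      (hB.closure.interior_nonempty_iff_affineSpan_eq_top).1 ⟨z, hz⟩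
    rw [h3, top_le_iff] at h2
    exact h1 h2
  · intro z hz
    -- find z' slightly beyond z in the direction away from x0
    have hcont : Continuous fun t : ℝ => z + t • (z - x0) := by continuity
    have h0 : (fun t : ℝ => z + t • (z - x0)) 0 ∈ interior (closure B) := by simpa using hz
    have := (hcont.tendsto 0).eventually (isOpen_interior.eventually_mem h0)
    obtain ⟨ε, hε, hmem⟩ := Metric.eventually_nhds_iff.1 this
    set t := ε / 2 with ht
    have htpos : (0:ℝ) < t := by positivity
    have hz' : z + t • (z - x0) ∈ closure B := by
      have : dist t (0:ℝ) < ε := by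
        rw [Real.dist_eq, sub_zero, abs_of_pos htpos, ht]; linarith
      exact interior_subset (hmem this)
    have hseg : z ∈ openSegment ℝ x0 (z + t • (z - x0)) := by
      refine ⟨t / (1 + t), 1 / (1 + t), by positivity, by positivity, ?_, ?_⟩
      · field_simp; ring
      · have h1t : (1:ℝ) + t ≠ 0 := by positivity
        rw [smul_add, smul_smul]
        have : (1 / (1 + t)) * t = t / (1 + t) := by field_simp
        match_scalars <;> field_simp <;> ring
    exact hB.openSegment_interior_closure_subset_interior hx0 hz' hseg

private lemma porosity {n : ℕ} {B : Set (EuclideanSpace ℝ (Fin n))} (hB : Convex ℝ B)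
    {x : EuclideanSpace ℝ (Fin n)} (hx : x ∈ closure B) (hx' : x ∈ closure (closure B)ᶜ)
    {r : ℝ} (hr : 0 < r) :
    ∃ w, closedBall w (r/8) ⊆ closedBall x r ∧
      ∀ y ∈ closedBall w (r/8), y ∉ closure B := by
  set C := closure B with hC
  have hCc : IsClosed C := isClosed_closure
  have hCconv : Convex ℝ C := hB.closure
  have hCne : C.Nonempty := ⟨x, hx⟩
  obtain ⟨z, hzC, hzx⟩ : ∃ z ∉ C, dist x z < r / 100 := by
    obtain ⟨z, hz1, hz2⟩ := Metric.mem_closure_iff.1 hx' (r/100) (by positivity)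
    exact ⟨z, hz1, hz2⟩
  obtain ⟨p, hpC, hp⟩ := exists_norm_eq_iInf_of_complete_convex hCne
    (hCc.isComplete) hCconv z
  have hproj : ∀ y ∈ C, inner ℝ (z - p) (y - p) ≤ (0:ℝ) :=
    (norm_eq_iInf_iff_real_inner_le_zero hCconv hpC).1 hp
  have hzp : z ≠ p := fun h => hzC (h ▸ hpC)
  have hnorm_pos : (0:ℝ) < ‖z - p‖ := by
    rw [norm_pos_iff]; exact sub_ne_zero.2 hzp
  set ν := ‖z - p‖⁻¹ • (z - p) with hν
  have hν1 : ‖ν‖ = 1 := by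
    rw [hν, norm_smul, norm_inv, norm_norm, inv_mul_cancel₀ (ne_of_gt hnorm_pos)]
  -- ‖z - p‖ ≤ ‖z - x‖
  have hinf : ‖z - p‖ ≤ ‖z - x‖ := by
    rw [hp]
    exact ciInf_le ⟨0, fun v ⟨w, hw⟩ => hw ▸ norm_nonneg _⟩ (⟨x, hx⟩ : C)
  have hpx : ‖p - x‖ ≤ 2 * (r / 100) := by
    have h1 : ‖p - x‖ ≤ ‖p - z‖ + ‖z - x‖ := norm_sub_le_norm_sub_add_norm_sub p z x
    have h2 : ‖z - x‖ < r / 100 := by rw [← dist_eq_norm, dist_comm]; exact hzx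
    have h3 : ‖p - z‖ = ‖z - p‖ := norm_sub_rev p z
    linarith
  refine ⟨x + (r/2) • ν, ?_, ?_⟩
  · intro y hy
    rw [mem_closedBall] at hy ⊢
    have hwx : dist (x + (r/2) • ν) x = r / 2 := by
      rw [dist_eq_norm]
      have : x + (r/2) • ν - x = (r/2) • ν := by abel
      rw [this, norm_smul, hν1, Real.norm_eq_abs, abs_of_pos (by positivity : (0:ℝ) < r/2)]
      ring
    calc dist y x ≤ dist y (x + (r/2) • ν) + dist (x + (r/2) • ν) x := dist_triangle _ _ _
      _ ≤ r/8 + r/2 := by rw [hwx]; linarith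
      _ ≤ r := by linarith
  · intro y hy hyC
    set w := x + (r/2) • ν with hw
    have h1 : inner ℝ ν (y - p) ≤ (0:ℝ) := by
      rw [hν, real_inner_smul_left]
      exact mul_nonpos_of_nonneg_of_nonpos (by positivity) (hproj y hyC)
    have hdecomp : y - w = (y - p) + (p - x) - (r/2) • ν := by rw [hw]; abel
    have h2 : inner ℝ ν (y - w) ≤ 2 * (r/100) - r/2 := by
      rw [hdecomp]
      rw [inner_sub_right, inner_add_right, real_inner_smul_right, real_inner_self_eq_norm_sq, hν1]
      have h3 : inner ℝ ν (p - x) ≤ ‖p - x‖ := by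
        calc inner ℝ ν (p - x) ≤ ‖ν‖ * ‖p - x‖ := real_inner_le_norm _ _
          _ = ‖p - x‖ := by rw [hν1, one_mul]
      nlinarith
    have h4 : -(r/8) ≤ inner ℝ ν (y - w) := by
      have := abs_real_inner_le_norm ν (y - w)
      rw [hν1, one_mul] at this
      have h5 : ‖y - w‖ ≤ r/8 := by
        have hh := mem_closedBall.1 hy
        rwa [dist_eq_norm] at hh
      have := abs_le.1 (this.trans h5)
      linarith [this.1]
    linarith

end Auxiliary

open Metric

/-- Proposition `p.noboundarymass` (iv) of the paper. A nonzero
locally finite Borel measure which is doubling with respect to the family of homothetic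
copies of a fixed rectangle assigns zero mass to the boundary of every convex set. -/
theorem statement13 (n : ℕ) (R₀ : Set (EuclideanSpace ℝ (Fin n))) (hR₀ : IsRect R₀)
    (μ : Measure (EuclideanSpace ℝ (Fin n)))
    (hloc : IsLocallyFiniteMeasure μ) (hμ : μ ≠ 0)
    (hdbl : ∃ δ : ℝ, 1 < δ ∧ DoublingWrt μ (homCopies R₀) δ) :
    ∀ B : Set (EuclideanSpace ℝ (Fin n)), Convex ℝ B →
      μ (closure B \ interior B) = 0 := by
  obtain ⟨δ, hδ1, hdbl⟩ := hdbl
  obtain ⟨c, ρ, P, hρ, hP, hconv, hin, hout⟩ := rect_struct hR₀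
  haveI := hloc
  have hbd := ball_doubling hconv hρ hP hin hout hdbl
  have hδ0 : (0:ℝ) < δ := lt_trans zero_lt_one hδ1
  -- positivity of balls
  have hpos : ∀ (y : EuclideanSpace ℝ (Fin n)) (t : ℝ), 0 < t → 0 < μ (closedBall y t) := by
    intro y t ht
    by_contra h
    push_neg at h
    have h0 : μ (closedBall y t) = 0 := le_antisymm h zero_le
    have hall : ∀ m : ℕ, μ (closedBall y m) = 0 := by
      intro m
      obtain ⟨k, hk⟩ := pow_unbounded_of_one_lt ((m : ℝ) * P / (t * ρ)) one_lt_two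
      have hsub : closedBall y (m : ℝ) ⊆ closedBall y (2 ^ k * (t / P) * ρ) := by
        apply closedBall_subset_closedBall
        rw [div_lt_iff₀ (by positivity)] at hk
        have h6 : 2 ^ k * (t / P) * ρ = 2 ^ k * (t * ρ) / P := by ring
        rw [h6, le_div_iff₀ hP]
        nlinarith
      have h2 := (measure_mono hsub).trans (hbd y (t / P) k (by positivity))
      rw [div_mul_cancel₀ _ (ne_of_gt hP), h0, mul_zero] at h2
      exact le_antisymm h2 zero_le
    have huniv : μ Set.univ = 0 := by
      have hcov : Set.univ ⊆ ⋃ m : ℕ, closedBall y m := by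
        intro v _
        exact Set.mem_iUnion.2 ⟨⌈dist v y⌉₊, mem_closedBall.2 (Nat.le_ceil _)⟩
      exact le_antisymm ((measure_mono hcov).trans
        (le_of_eq (measure_iUnion_null fun m => hall m))) zero_le
    exact hμ (Measure.measure_univ_eq_zero.1 huniv)
  -- choose the doubling exponent
  obtain ⟨k₀, hk₀⟩ := pow_unbounded_of_one_lt (16 * P / ρ) one_lt_two
  have hk₀' : 16 * P < 2 ^ k₀ * ρ := by
    rw [div_lt_iff₀ hρ] at hk₀
    linarith
  set C0 : ℝ≥0∞ := (ENNReal.ofReal δ) ^ k₀ with hC0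
  have hC0ne : C0 ≠ 0 := pow_ne_zero _ (ne_of_gt (ENNReal.ofReal_pos.2 hδ0))
  have hC0top : C0 ≠ ⊤ := ENNReal.pow_ne_top ENNReal.ofReal_ne_top
  intro B hB
  by_contra hF
  set F := closure B \ interior B with hFdef
  have hFmeas : MeasurableSet F :=
    isClosed_closure.measurableSet.diff isOpen_interior.measurableSet
  have hbes := Besicovitch.ae_tendsto_measure_inter_div μ F
  have hres : μ.restrict F ≠ 0 := fun h => hF (Measure.restrict_eq_zero.1 h)
  haveI : (ae (μ.restrict F)).NeBot := ae_neBot.2 hres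
  obtain ⟨x, hxtend, hxF⟩ := (hbes.and (ae_restrict_mem hFmeas)).exists
  have hxcl : x ∈ closure B := hxF.1
  have hxfr : x ∈ closure (closure B)ᶜ := by
    have hxint : x ∉ interior (closure B) := fun h => hxF.2 (convex_interior_closure hB h)
    have : x ∈ frontier (closure B) := by
      rw [isClosed_closure.frontier_eq]
      exact ⟨hxcl, hxint⟩
    rw [frontier_eq_closure_inter_closure] at this
    exact this.2
  -- the key porosity bound at every scale
  have key : ∀ r : ℝ, r ∈ Set.Ioi (0:ℝ) →
      μ (F ∩ closedBall x r) / μ (closedBall x r) ≤ 1 - C0⁻¹ := by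
    intro r hr
    rw [Set.mem_Ioi] at hr
    obtain ⟨w, hw1, hw2⟩ := porosity hB hxcl hxfr hr
    have hwx : dist w x ≤ r := hw1 (mem_closedBall_self (by positivity))
    have hcmp : μ (closedBall x r) ≤ C0 * μ (closedBall w (r / 8)) := by
      have h1 : closedBall x r ⊆ closedBall w (2 * r) := by
        intro v hv
        rw [mem_closedBall] at hv ⊢
        calc dist v w ≤ dist v x + dist x w := dist_triangle _ _ _
          _ ≤ r + r := add_le_add hv (dist_comm w x ▸ hwx)
          _ = 2 * r := by ring
      have h2 : closedBall w (2 * r) ⊆ closedBall w (2 ^ k₀ * (r / (8 * P)) * ρ) := by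
        apply closedBall_subset_closedBall
        have h6 : 2 ^ k₀ * (r / (8 * P)) * ρ = (2 ^ k₀ * ρ) * r / (8 * P) := by ring
        rw [h6, le_div_iff₀ (by positivity : (0:ℝ) < 8 * P)]
        nlinarith
      have h3 := hbd w (r / (8 * P)) k₀ (by positivity)
      have h4 : r / (8 * P) * P = r / 8 := by field_simp
      rw [h4] at h3
      exact le_trans (measure_mono (h1.trans h2)) h3
    set b := μ (closedBall x r) with hb
    set m := μ (closedBall w (r / 8)) with hm
    have hbtop : b ≠ ⊤ := (IsCompact.measure_lt_top (isCompact_closedBall x r)).ne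
    have hb0 : b ≠ 0 := (hpos x r hr).ne'
    have hm_le : m ≤ b := measure_mono hw1
    have hmtop : m ≠ ⊤ := (hm_le.trans_lt (lt_top_iff_ne_top.2 hbtop)).ne
    have hFsub : F ∩ closedBall x r ⊆ closedBall x r \ closedBall w (r / 8) := by
      rintro v ⟨hv1, hv2⟩
      exact ⟨hv2, fun hvw => hw2 v hvw hv1.1⟩
    have hdiff : μ (closedBall x r \ closedBall w (r / 8)) = b - m :=
      measure_diff hw1 measurableSet_closedBall.nullMeasurableSet hmtop
    have hinv : C0⁻¹ * b ≤ m := by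
      have h5 := mul_le_mul_right hcmp C0⁻¹
      rwa [← mul_assoc, ENNReal.inv_mul_cancel hC0ne hC0top, one_mul] at h5
    calc μ (F ∩ closedBall x r) / b ≤ (b - m) / b :=
          ENNReal.div_le_div_right ((measure_mono hFsub).trans_eq hdiff) _
      _ ≤ (b - C0⁻¹ * b) / b :=
          ENNReal.div_le_div_right (tsub_le_tsub_left hinv b) _
      _ = ((1 - C0⁻¹) * b) / b := by
          rw [ENNReal.sub_mul (fun _ _ => hbtop), one_mul]
      _ = (1 - C0⁻¹) * (b / b) := by rw [mul_div_assoc]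
      _ = 1 - C0⁻¹ := by rw [ENNReal.div_self hb0 hbtop, mul_one]
  have hle : (1 : ℝ≥0∞) ≤ 1 - C0⁻¹ :=
    le_of_tendsto hxtend (eventually_mem_nhdsWithin.mono key)
  have hlt : (1 : ℝ≥0∞) - C0⁻¹ < 1 :=
    ENNReal.sub_lt_self ENNReal.one_ne_top one_ne_zero (ENNReal.inv_ne_zero.2 hC0top)
  exact absurd hle (not_le.2 hlt)
end

section
/- Let K be a convex set contained in the unit cube Q = [0,1]ⁿ and let μ be a nonzero locally finite nonnegative Borel measure on ℝⁿ which is doubling with respect to the family of all axis-parallel cubes with constant δ_μ. Then for every ε with 0 < ε < 1, μ({x ∈ ℝⁿ \ K : dist(x, K) < ε}) ≤ 9·δ_μ^{4 + ⌈log₂(34√n)⌉}·(log₂(1/ε))^{−1}·μ(Q). -/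
open MeasureTheory Set Filter
open scoped ENNReal Topology Pointwise

namespace Aux
variable {n : ℕ}

/-- open axis cube with center `c` and half-side `h`. -/
def cube (c : EuclideanSpace ℝ (Fin n)) (h : ℝ) : Set (EuclideanSpace ℝ (Fin n)) :=
  {x | ∀ i, x i ∈ Set.Ioo (c i - h) (c i + h)}

lemma cube_isAxisCube (c : EuclideanSpace ℝ (Fin n)) {h : ℝ} (hh : 0 < h) :
    IsAxisCube (cube c h) := by
  refine ⟨fun i => c i - h, 2 * h, by linarith, ?_⟩
  ext x; constructor <;> intro hx i <;> have := hx i <;>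
    simp only [Set.mem_Ioo] at * <;> constructor <;> linarith [this.1, this.2]

lemma isOpen_cube (c : EuclideanSpace ℝ (Fin n)) (h : ℝ) : IsOpen (cube c h) := by
  have : cube c h = ⋂ i, (fun x : EuclideanSpace ℝ (Fin n) => x i) ⁻¹' Set.Ioo (c i - h) (c i + h) := by
    ext x; simp [cube]
  rw [this]
  exact isOpen_iInter_of_finite fun i =>
    ((EuclideanSpace.proj i : EuclideanSpace ℝ (Fin n) →L[ℝ] ℝ).continuous).isOpen_preimage _ isOpen_Ioo

lemma cube_mono (c : EuclideanSpace ℝ (Fin n)) {h h' : ℝ} (hh : h ≤ h') :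
    cube c h ⊆ cube c h' := by
  intro x hx i; have := hx i; simp only [Set.mem_Ioo] at *
  constructor <;> linarith [this.1, this.2]

lemma double_cube (c : EuclideanSpace ℝ (Fin n)) (h : ℝ) :
    (-c) +ᵥ ((2:ℝ) • cube c h) = cube c (2 * h) := by
  ext x
  constructor
  · rintro ⟨y, ⟨z, hz, rfl⟩, rfl⟩ i
    have := hz i; simp only [Set.mem_Ioo] at *
    simp only [vadd_eq_add]
    have e : ((-c) + (2:ℝ) • z) i = -(c i) + 2 * z i := by
      simp [PiLp.add_apply, PiLp.neg_apply, PiLp.smul_apply]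
    rw [e]
    constructor <;> linarith [this.1, this.2]
  · intro hx
    refine ⟨(2:ℝ) • ((2:ℝ)⁻¹ • (x + c)), ⟨(2:ℝ)⁻¹ • (x + c), ?_, rfl⟩, ?_⟩
    · intro i; have := hx i; simp only [Set.mem_Ioo] at *
      have e : ((2:ℝ)⁻¹ • (x + c)) i = (x i + c i) / 2 := by
        simp [PiLp.smul_apply, PiLp.add_apply]; ring
      rw [e]
      constructor <;> [linarith [this.1]; linarith [this.2]]
    · rw [smul_smul]; norm_num

lemma double_measure {μ : Measure (EuclideanSpace ℝ (Fin n))} {δ : ℝ}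
    (hdbl : DoublingWrt μ {C | IsAxisCube C} δ) (c : EuclideanSpace ℝ (Fin n))
    {h : ℝ} (hh : 0 < h) :
    μ (cube c (2 * h)) ≤ ENNReal.ofReal δ * μ (cube c h) := by
  have key := hdbl (cube c h) (cube_isAxisCube c hh) (-c)
  rw [double_cube] at key
  exact key (cube_mono c (by linarith))

lemma iterate_measure {μ : Measure (EuclideanSpace ℝ (Fin n))} {δ : ℝ}
    (hdbl : DoublingWrt μ {C | IsAxisCube C} δ) (c : EuclideanSpace ℝ (Fin n))
    {h : ℝ} (hh : 0 < h) (k : ℕ) :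
    μ (cube c (2 ^ k * h)) ≤ (ENNReal.ofReal δ) ^ k * μ (cube c h) := by
  induction k with
  | zero => simp
  | succ k ih =>
    have e : (2:ℝ) ^ (k+1) * h = 2 * (2 ^ k * h) := by ring
    rw [e]
    calc μ (cube c (2 * (2 ^ k * h))) ≤ ENNReal.ofReal δ * μ (cube c (2 ^ k * h)) :=
          double_measure hdbl c (by positivity)
      _ ≤ ENNReal.ofReal δ * ((ENNReal.ofReal δ) ^ k * μ (cube c h)) :=
          mul_le_mul_right ih _
      _ = (ENNReal.ofReal δ) ^ (k+1) * μ (cube c h) := by ring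

lemma abs_coord_le_dist (x y : EuclideanSpace ℝ (Fin n)) (i : Fin n) :
    |x i - y i| ≤ dist x y := by
  rw [EuclideanSpace.dist_eq]
  have h1 : |x i - y i| = Real.sqrt (dist (x i) (y i) ^ 2) := by
    rw [Real.sqrt_sq_eq_abs, Real.dist_eq, abs_abs]
  rw [h1]
  apply Real.sqrt_le_sqrt
  exact Finset.single_le_sum (f := fun j => dist (x j) (y j) ^ 2)
    (fun j _ => sq_nonneg _) (Finset.mem_univ i)

lemma mem_cube_of_dist_lt {x y : EuclideanSpace ℝ (Fin n)} {H : ℝ}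
    (hd : dist x y < H) : x ∈ cube y H := by
  intro i
  have := (abs_lt.1 ((abs_coord_le_dist x y i).trans_lt hd))
  exact ⟨by linarith [this.1], by linarith [this.2]⟩

lemma dist_le_of_mem_cube {x y : EuclideanSpace ℝ (Fin n)} {h : ℝ} (hh : 0 ≤ h)
    (hx : x ∈ cube y h) : dist x y ≤ Real.sqrt n * h := by
  rw [EuclideanSpace.dist_eq]
  have hb : ∀ i : Fin n, dist (x i) (y i) ^ 2 ≤ h ^ 2 := by
    intro i
    have := hx i
    rw [Real.dist_eq]
    rw [sq_abs]
    apply sq_le_sq'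
    · simp only [Set.mem_Ioo] at this; linarith [this.1]
    · simp only [Set.mem_Ioo] at this; linarith [this.2]
  calc Real.sqrt (∑ i, dist (x i) (y i) ^ 2) ≤ Real.sqrt (n * h ^ 2) := by
        apply Real.sqrt_le_sqrt
        calc (∑ i, dist (x i) (y i) ^ 2) ≤ ∑ _i : Fin n, h ^ 2 :=
              Finset.sum_le_sum (fun i _ => hb i)
          _ = n * h ^ 2 := by simp [mul_comm]
    _ = Real.sqrt n * h := by
        rw [Real.sqrt_mul (Nat.cast_nonneg n), Real.sqrt_sq hh]

open EMetric in
lemma exists_proj {K : Set (EuclideanSpace ℝ (Fin n))} (hK : Convex ℝ K)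
    {x : EuclideanSpace ℝ (Fin n)} {ε : ℝ}
    (hx : EMetric.infEdist x K < ENNReal.ofReal ε) :
    ∃ p ∈ closure K, dist x p < ε ∧
      ∀ w ∈ closure K, inner ℝ (x - p) (w - p) ≤ (0:ℝ) := by
  obtain ⟨w₀, hw₀K, hw₀⟩ := infEdist_lt_iff.1 hx
  have hne : (closure K).Nonempty := ⟨w₀, subset_closure hw₀K⟩
  obtain ⟨p, hpK, hp⟩ := exists_norm_eq_iInf_of_complete_convex hne
    (isClosed_closure.isComplete) (hK.closure) x
  have hinner := (norm_eq_iInf_iff_real_inner_le_zero hK.closure hpK).1 hp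
  refine ⟨p, hpK, ?_, hinner⟩
  have hmin : dist x p ≤ dist x w₀ := by
    have h0 := hinner w₀ (subset_closure hw₀K)
    have expand : ‖x - w₀‖ ^ 2 = ‖x - p‖ ^ 2 - 2 * inner ℝ (x - p) (w₀ - p) + ‖w₀ - p‖ ^ 2 := by
      have : x - w₀ = (x - p) - (w₀ - p) := by abel
      rw [this, norm_sub_sq_real]
    have h2 : ‖x - p‖ ^ 2 ≤ ‖x - w₀‖ ^ 2 := by nlinarith [sq_nonneg ‖w₀ - p‖]
    rw [dist_eq_norm, dist_eq_norm]
    nlinarith [norm_nonneg (x - p), norm_nonneg (x - w₀)]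
  calc dist x p ≤ dist x w₀ := hmin
    _ < ε := by
      have := hw₀
      rw [edist_dist] at this
      exact (ENNReal.ofReal_lt_ofReal_iff_of_nonneg dist_nonneg).1 this

open EMetric in
lemma outward_infEdist {K : Set (EuclideanSpace ℝ (Fin n))}
    {p ν : EuclideanSpace ℝ (Fin n)} (hp : p ∈ closure K) (hν : ‖ν‖ = 1)
    (hproj : ∀ w ∈ closure K, inner ℝ ν (w - p) ≤ (0:ℝ)) {s : ℝ} (hs : 0 ≤ s) :
    EMetric.infEdist (p + s • ν) K = ENNReal.ofReal s := by
  apply le_antisymm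
  · rw [EMetric.infEdist, ← EMetric.infEdist_closure]
    calc EMetric.infEdist (p + s • ν) (closure K) ≤ edist (p + s • ν) p :=
          infEdist_le_edist_of_mem hp
      _ = ENNReal.ofReal s := by
          rw [edist_dist, dist_eq_norm]
          congr 1
          simp [norm_smul, abs_of_nonneg hs, hν]
  · apply le_infEdist.2
    intro w hw
    rw [edist_dist]
    apply ENNReal.ofReal_le_ofReal
    rw [dist_eq_norm]
    have h0 : inner ℝ ν (w - p) ≤ (0:ℝ) := hproj w (subset_closure hw)
    have expand : ‖p + s • ν - w‖ ^ 2
        = s ^ 2 + 2 * s * inner ℝ ν (p - w) + ‖p - w‖ ^ 2 := by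
      have e : p + s • ν - w = s • ν + (p - w) := by abel
      rw [e, norm_add_sq_real, real_inner_smul_left, norm_smul]
      simp [hν, abs_of_nonneg hs]
      ring
    have hin : (0:ℝ) ≤ inner ℝ ν (p - w) := by
      have : (p - w) = -(w - p) := by abel
      rw [this, inner_neg_right]; linarith
    have h2 : s ^ 2 ≤ ‖p + s • ν - w‖ ^ 2 := by nlinarith [sq_nonneg ‖p - w‖]
    calc s = Real.sqrt (s ^ 2) := (Real.sqrt_sq hs).symm
      _ ≤ Real.sqrt (‖p + s • ν - w‖ ^ 2) := Real.sqrt_le_sqrt h2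
      _ = ‖p + s • ν - w‖ := Real.sqrt_sq (norm_nonneg _)

lemma convex_interior_closure_subset {K : Set (EuclideanSpace ℝ (Fin n))}
    (hK : Convex ℝ K) : interior (closure K) ⊆ K := by
  by_cases hne : (interior K).Nonempty
  · obtain ⟨w, hw⟩ := hne
    intro z hz
    obtain ⟨r, hr, hball⟩ := Metric.mem_nhds_iff.1 (mem_interior_iff_mem_nhds.1 hz)
    by_cases hzw : z = w
    · exact hzw ▸ interior_subset hw
    have hd : 0 < ‖z - w‖ := by
      simp only [norm_pos_iff, sub_ne_zero]; exact hzw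
    set θ : ℝ := r / (2 * ‖z - w‖) with hθdef
    have hθ : 0 < θ := by positivity
    set z' : EuclideanSpace ℝ (Fin n) := z + θ • (z - w) with hz'def
    have hz' : z' ∈ closure K := by
      apply hball
      simp only [Metric.mem_ball, hz'def, dist_self_add_left, norm_smul,
        Real.norm_eq_abs, abs_of_pos hθ]
      have hval : θ * ‖z - w‖ = r / 2 := by rw [hθdef]; field_simp
      have hval2 : ‖z - w‖ * θ = r / 2 := by rw [mul_comm]; exact hval
      linarith
    have hcombo : (θ/(1+θ)) • w + (1/(1+θ)) • z' = z := by
      rw [hz'def, smul_add, smul_smul]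
      have h1θ : (1:ℝ) + θ ≠ 0 := by positivity
      rw [smul_sub]
      have : (θ/(1+θ)) • w + ((1/(1+θ)) • z + ((1/(1+θ)*θ) • z - (1/(1+θ)*θ) • w)) =
          ((θ/(1+θ)) - (1/(1+θ)*θ)) • w + ((1/(1+θ)) + (1/(1+θ)*θ)) • z := by
        rw [sub_smul, add_smul]; abel
      rw [this]
      have e1 : (θ/(1+θ)) - (1/(1+θ)*θ) = 0 := by field_simp; ring
      have e2 : (1/(1+θ)) + (1/(1+θ)*θ) = 1 := by field_simp
      rw [e1, e2]; simp
    have := hK.combo_interior_closure_mem_interior (a := θ/(1+θ)) (b := 1/(1+θ))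
      hw hz' (by positivity) (by positivity) (by field_simp; ring)
    rw [hcombo] at this
    exact interior_subset this
  · rw [Set.not_nonempty_iff_eq_empty] at hne
    have hspan : affineSpan ℝ K ≠ ⊤ := by
      intro htop
      rw [← hK.interior_nonempty_iff_affineSpan_eq_top] at htop
      rw [hne] at htop
      exact Set.not_nonempty_empty htop
    have hclosed : IsClosed (affineSpan ℝ K : Set (EuclideanSpace ℝ (Fin n))) :=
      (affineSpan ℝ K).closed_of_finiteDimensional
    have hsub : closure K ⊆ (affineSpan ℝ K : Set (EuclideanSpace ℝ (Fin n))) :=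
      hclosed.closure_subset_iff.2 (subset_affineSpan ℝ K)
    intro z hz
    exfalso
    have hzspan : z ∈ interior ((affineSpan ℝ K : Set (EuclideanSpace ℝ (Fin n)))) :=
      interior_mono hsub hz
    have hconv : Convex ℝ ((affineSpan ℝ K : Set (EuclideanSpace ℝ (Fin n)))) :=
      (affineSpan ℝ K).convex
    have : affineSpan ℝ ((affineSpan ℝ K : Set (EuclideanSpace ℝ (Fin n)))) = ⊤ :=
      hconv.interior_nonempty_iff_affineSpan_eq_top.1 ⟨z, hzspan⟩
    rw [AffineSubspace.affineSpan_coe] at this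
    exact hspan this

lemma exists_net (P : Set (EuclideanSpace ℝ (Fin n))) {r : ℝ} (hr : 0 < r) :
    ∃ M ⊆ P, (∀ q ∈ M, ∀ q' ∈ M, q ≠ q' → r ≤ dist q q') ∧
      (∀ p ∈ P, ∃ q ∈ M, dist p q < r) := by
  set S : Set (Set (EuclideanSpace ℝ (Fin n))) :=
    {M | M ⊆ P ∧ ∀ q ∈ M, ∀ q' ∈ M, q ≠ q' → r ≤ dist q q'}
  obtain ⟨M, hMS, hMmax⟩ : ∃ M ∈ S, ∀ M' ∈ S, M ⊆ M' → M' = M := by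
    have := zorn_subset S ?_
    · obtain ⟨M, hM⟩ := this
      exact ⟨M, hM.prop, fun M' hM' hsub => subset_antisymm (hM.le_of_ge hM' hsub) hsub⟩
    · intro c hcS hchain
      refine ⟨⋃₀ c, ⟨?_, ?_⟩, fun s hs => Set.subset_sUnion_of_mem hs⟩
      · exact Set.sUnion_subset fun s hs => (hcS hs).1
      · rintro q ⟨s, hs, hqs⟩ q' ⟨s', hs', hq's'⟩ hne
        rcases hchain.total hs hs' with h | h
        · exact (hcS hs').2 q (h hqs) q' hq's' hne
        · exact (hcS hs).2 q hqs q' (h hq's') hne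
  refine ⟨M, hMS.1, hMS.2, ?_⟩
  intro p hp
  by_contra hcon
  push_neg at hcon
  have hpM : p ∉ M := fun h => absurd (dist_self p ▸ hcon p h) (by simpa using hr)
  have : insert p M ∈ S := by
    constructor
    · exact Set.insert_subset hp hMS.1
    · rintro q (rfl | hq) q' (rfl | hq') hne
      · exact absurd rfl hne
      · exact hcon q' hq'
      · rw [dist_comm]; exact hcon q hq
      · exact hMS.2 q hq q' hq' hne
  have := hMmax _ this (Set.subset_insert p M)
  exact hpM (this ▸ Set.mem_insert p M)

lemma net_countable {M : Set (EuclideanSpace ℝ (Fin n))} {r : ℝ} (hr : 0 < r)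
    (hsep : ∀ q ∈ M, ∀ q' ∈ M, q ≠ q' → 2 * r ≤ dist q q') : M.Countable := by
  apply Set.PairwiseDisjoint.countable_of_isOpen
    (s := fun q => Metric.ball q r)
  · intro q hq q' hq' hne
    apply Metric.ball_disjoint_ball
    exact (by linarith : r + r ≤ 2 * r).trans (hsep q hq q' hq' hne)
  · exact fun q _ => Metric.isOpen_ball
  · exact fun q _ => ⟨q, Metric.mem_ball_self hr⟩

open EMetric in
lemma shell_bound {μ : Measure (EuclideanSpace ℝ (Fin n))} {δ : ℝ}
    (hdbl : DoublingWrt μ {C | IsAxisCube C} δ)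
    {K : Set (EuclideanSpace ℝ (Fin n))} (hK : Convex ℝ K)
    (hn : 0 < n) {t ε : ℝ} (ht : 0 < t) (hε : 0 < ε) (hεt : ε ≤ t)
    {k : ℕ} (hk : 25 * Real.sqrt n ≤ 2 ^ k) :
    μ {x | x ∉ K ∧ EMetric.infEdist x K < ENNReal.ofReal ε} ≤
      (ENNReal.ofReal δ) ^ k *
        μ {x | ENNReal.ofReal (t/2) ≤ EMetric.infEdist x K ∧
               EMetric.infEdist x K < ENNReal.ofReal t} := by
  classical
  have hsn : 0 < Real.sqrt n := Real.sqrt_pos.2 (by exact_mod_cast hn)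
  set h : ℝ := t / (5 * Real.sqrt n) with hh
  have hhpos : 0 < h := by positivity
  set P : Set (EuclideanSpace ℝ (Fin n)) :=
    {p | p ∈ closure K ∧
      (∃ w, ‖w‖ = 1 ∧ ∀ z ∈ closure K, inner ℝ w (z - p) ≤ (0:ℝ))} with hP
  obtain ⟨M, hMP, hMsep, hMcov⟩ := exists_net P (by linarith : (0:ℝ) < 2 * t)
  have hMc : M.Countable := net_countable ht hMsep
  haveI : Countable M := hMc.to_subtype
  choose ν hν1 hν2 using (fun q : M => (hMP q.2).2)
  set y : M → EuclideanSpace ℝ (Fin n) := fun q => (q : EuclideanSpace ℝ (Fin n)) + (3*t/4) • ν q with hy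
  have hyd : ∀ q : M, EMetric.infEdist (y q) K = ENNReal.ofReal (3*t/4) :=
    fun q => outward_infEdist (hMP q.2).1 (hν1 q) (hν2 q) (by linarith)
  have hydist : ∀ q : M, dist (y q) (q : EuclideanSpace ℝ (Fin n)) = 3*t/4 := by
    intro q
    rw [hy]
    simp only [dist_self_add_left, norm_smul, Real.norm_eq_abs, hν1 q, mul_one]
    rw [abs_of_nonneg (by linarith)]
  have hd5 : ∀ q : M, ∀ z ∈ cube (y q) h, dist z (y q) ≤ t / 5 := by
    intro q z hz
    have hdz : dist z (y q) ≤ Real.sqrt n * h := dist_le_of_mem_cube hhpos.le hz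
    calc dist z (y q) ≤ Real.sqrt n * (t/(5*Real.sqrt n)) := hdz
      _ = t/5 := by field_simp
  have hsmall_sub : ∀ q : M, cube (y q) h ⊆
      {x | ENNReal.ofReal (t/2) ≤ EMetric.infEdist x K ∧
           EMetric.infEdist x K < ENNReal.ofReal t} := by
    intro q z hz
    have hdz5 : dist z (y q) ≤ t / 5 := hd5 q z hz
    constructor
    · have h1 : EMetric.infEdist (y q) K ≤ EMetric.infEdist z K + edist (y q) z :=
        infEdist_le_infEdist_add_edist
      rw [hyd q] at h1
      have h2 : edist (y q) z ≤ ENNReal.ofReal (t/5) := by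
        rw [edist_dist]
        exact ENNReal.ofReal_le_ofReal (by rw [dist_comm]; exact hdz5)
      have h3 : ENNReal.ofReal (3*t/4) ≤ EMetric.infEdist z K + ENNReal.ofReal (t/5) :=
        h1.trans (add_le_add_right h2 _)
      have h4 : ENNReal.ofReal (3*t/4) - ENNReal.ofReal (t/5) ≤ EMetric.infEdist z K :=
        tsub_le_iff_right.2 h3
      calc ENNReal.ofReal (t/2) ≤ ENNReal.ofReal (3*t/4 - t/5) :=
            ENNReal.ofReal_le_ofReal (by linarith)
        _ = ENNReal.ofReal (3*t/4) - ENNReal.ofReal (t/5) :=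
            ENNReal.ofReal_sub _ (by linarith)
        _ ≤ EMetric.infEdist z K := h4
    · have h1 : EMetric.infEdist z K ≤ EMetric.infEdist (y q) K + edist z (y q) :=
        infEdist_le_infEdist_add_edist
      rw [hyd q] at h1
      calc EMetric.infEdist z K ≤ ENNReal.ofReal (3*t/4) + edist z (y q) := h1
        _ ≤ ENNReal.ofReal (3*t/4) + ENNReal.ofReal (t/5) := by
            apply add_le_add_right
            rw [edist_dist]
            exact ENNReal.ofReal_le_ofReal hdz5
        _ = ENNReal.ofReal (3*t/4 + t/5) := (ENNReal.ofReal_add (by linarith) (by linarith)).symm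
        _ < ENNReal.ofReal t := (ENNReal.ofReal_lt_ofReal_iff ht).2 (by linarith)
  have hdisj : Pairwise (Function.onFun Disjoint (fun q : M => cube (y q) h)) := by
    intro q q' hne
    rw [Function.onFun, Set.disjoint_left]
    intro z hz hz'
    have d1 : dist z (y q) ≤ t/5 := hd5 q z hz
    have d2 : dist z (y q') ≤ t/5 := hd5 q' z hz'
    have hsep : 2*t ≤ dist (q : EuclideanSpace ℝ (Fin n)) (q' : EuclideanSpace ℝ (Fin n)) :=
      hMsep _ q.2 _ q'.2 (fun hEq => hne (Subtype.ext hEq))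
    have t1 := dist_triangle4 (q : EuclideanSpace ℝ (Fin n)) (y q) (y q')
      (q' : EuclideanSpace ℝ (Fin n))
    have t2 := dist_triangle (y q) z (y q')
    have e1 : dist (q : EuclideanSpace ℝ (Fin n)) (y q) = 3*t/4 := by
      rw [dist_comm]; exact hydist q
    have e2 : dist (y q') (q' : EuclideanSpace ℝ (Fin n)) = 3*t/4 := hydist q'
    have e3 : dist (y q) z = dist z (y q) := dist_comm _ _
    linarith
  have hcov : {x | x ∉ K ∧ EMetric.infEdist x K < ENNReal.ofReal ε} ⊆
      ⋃ q : M, cube (y q) (2^k * h) := by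
    rintro x ⟨hxK, hxd⟩
    obtain ⟨x', hx'c, hxx', hx'd⟩ :
        ∃ x', x' ∉ closure K ∧ dist x x' < ε ∧
          EMetric.infEdist x' K < ENNReal.ofReal ε := by
      by_cases hxc : x ∈ closure K
      · have hfr : x ∈ closure ((closure K)ᶜ) := by
          rw [_root_.mem_closure_iff]
          intro U hU hxU
          by_contra hcon
          have hsub : U ⊆ closure K := by
            intro u hu
            by_contra huK
            exact hcon ⟨u, hu, huK⟩
          exact hxK (convex_interior_closure_subset hK
            (mem_interior.2 ⟨U, hsub, hU, hxU⟩))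
        rw [Metric.mem_closure_iff] at hfr
        obtain ⟨x', hx', hdx'⟩ := hfr ε hε
        refine ⟨x', hx', hdx', ?_⟩
        have h0 : EMetric.infEdist x K = 0 := by
          rw [EMetric.infEdist, ← infEdist_closure]
          exact infEdist_zero_of_mem hxc
        calc EMetric.infEdist x' K ≤ EMetric.infEdist x K + edist x' x :=
              infEdist_le_infEdist_add_edist
          _ = edist x' x := by rw [h0, zero_add]
          _ < ENNReal.ofReal ε := by
              rw [edist_dist]
              exact (ENNReal.ofReal_lt_ofReal_iff hε).2 (by rw [dist_comm]; exact hdx')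
      · exact ⟨x, hxc, by simpa using hε, hxd⟩
    obtain ⟨p, hpc, hpd, hpproj⟩ := exists_proj hK hx'd
    have hppos : (0:ℝ) < ‖x' - p‖ := by
      rw [norm_pos_iff, sub_ne_zero]
      exact fun hEq => hx'c (hEq ▸ hpc)
    have hpP : p ∈ P := by
      refine ⟨hpc, ⟨‖x' - p‖⁻¹ • (x' - p), ?_, ?_⟩⟩
      · rw [norm_smul, Real.norm_eq_abs, abs_of_pos (inv_pos.2 hppos)]
        field_simp
      · intro w hw
        rw [real_inner_smul_left]
        exact mul_nonpos_of_nonneg_of_nonpos (inv_nonneg.2 hppos.le) (hpproj w hw)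
    obtain ⟨q, hqM, hqd⟩ := hMcov p hpP
    refine Set.mem_iUnion.2 ⟨⟨q, hqM⟩, ?_⟩
    apply mem_cube_of_dist_lt
    have t1 := dist_triangle x x' p
    have t2 := dist_triangle x p (y ⟨q, hqM⟩)
    have t3 := dist_triangle p q (y ⟨q, hqM⟩)
    have e1 : dist q (y ⟨q, hqM⟩) = 3*t/4 := by
      rw [dist_comm]; exact hydist ⟨q, hqM⟩
    have h5 : (5:ℝ) * t ≤ 2^k * h := by
      rw [hh]
      have e : (2:ℝ)^k * (t/(5*Real.sqrt n)) = (2:ℝ)^k * t / (5*Real.sqrt n) := by ring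
      rw [e, le_div_iff₀ (by positivity)]
      calc 5*t*(5*Real.sqrt n) = (25*Real.sqrt n) * t := by ring
        _ ≤ 2^k * t := mul_le_mul_of_nonneg_right hk ht.le
    have : dist x (y ⟨q, hqM⟩) < 5 * t := by linarith
    linarith
  calc μ {x | x ∉ K ∧ EMetric.infEdist x K < ENNReal.ofReal ε}
      ≤ μ (⋃ q : M, cube (y q) (2^k * h)) := measure_mono hcov
    _ ≤ ∑' q : M, μ (cube (y q) (2^k * h)) := measure_iUnion_le _
    _ ≤ ∑' q : M, (ENNReal.ofReal δ)^k * μ (cube (y q) h) :=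
        ENNReal.tsum_le_tsum (fun q => iterate_measure hdbl _ hhpos k)
    _ = (ENNReal.ofReal δ)^k * ∑' q : M, μ (cube (y q) h) := ENNReal.tsum_mul_left
    _ = (ENNReal.ofReal δ)^k * μ (⋃ q : M, cube (y q) h) := by
        rw [measure_iUnion hdisj (fun q => (isOpen_cube _ _).measurableSet)]
    _ ≤ _ := mul_le_mul_right (measure_mono (Set.iUnion_subset hsmall_sub)) _
end Aux

/-- Lemma `l.weighted` of the paper. Let `K` be a convex subset of the
unit cube `Q = [0,1]ⁿ` and `μ` a nonzero locally finite Borel measure doubling with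
constant `δ` with respect to axis-parallel cubes. Then for `0 < ε < 1`, the `μ`-measure
of the `ε`-annulus around `K` is at most
`9·δ^{4+⌈log₂(34√n)⌉}·(log₂(1/ε))⁻¹·μ(Q)`. -/


theorem statement14 (n : ℕ) (μ : Measure (EuclideanSpace ℝ (Fin n)))
    (hloc : IsLocallyFiniteMeasure μ) (hμ : μ ≠ 0)
    (δ : ℝ) (hδ : 1 < δ) (hdbl : DoublingWrt μ {C | IsAxisCube C} δ)
    (K : Set (EuclideanSpace ℝ (Fin n))) (hK : Convex ℝ K)
    (hKQ : K ⊆ {x | ∀ i, x i ∈ Set.Icc (0 : ℝ) 1})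
    (ε : ℝ) (hε : 0 < ε) (hε1 : ε < 1) :
    μ {x | x ∉ K ∧ EMetric.infEdist x K < ENNReal.ofReal ε}
      ≤ ENNReal.ofReal
          (9 * δ ^ ((4 : ℤ) + ⌈Real.logb 2 (34 * Real.sqrt n)⌉) *
            (Real.logb 2 (1 / ε))⁻¹) *
        μ {x | ∀ i, x i ∈ Set.Icc (0 : ℝ) 1} := by
  classical
  rcases Nat.eq_zero_or_pos n with hn0 | hn
  · subst hn0
    have hempty : {x : EuclideanSpace ℝ (Fin 0) |
        x ∉ K ∧ EMetric.infEdist x K < ENNReal.ofReal ε} = ∅ := by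
      ext x
      simp only [Set.mem_setOf_eq, Set.mem_empty_iff_false, iff_false, not_and]
      intro hxK
      rcases Set.eq_empty_or_nonempty K with hKe | ⟨w, hw⟩
      · rw [hKe, EMetric.infEdist]; simp
      · exact absurd (show x ∈ K by
          have : x = w := by ext i; exact i.elim0
          rw [this]; exact hw) hxK
    rw [hempty, measure_empty]
    exact zero_le
  · set L := Real.logb 2 (1/ε) with hLdef
    have hL1 : (1:ℝ) < 1/ε := one_lt_one_div hε hε1
    have hLpos : 0 < L := Real.logb_pos one_lt_two hL1
    set N := ⌈L⌉₊ with hNdef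
    have hNpos : 0 < N := Nat.ceil_pos.2 hLpos
    set m₀ := ⌈Real.logb 2 (34 * Real.sqrt n)⌉ with hm₀def
    have hsn1 : (1:ℝ) ≤ Real.sqrt n := by
      rw [show (1:ℝ) = Real.sqrt 1 by simp]
      exact Real.sqrt_le_sqrt (by exact_mod_cast hn)
    have h34 : (1:ℝ) < 34 * Real.sqrt n := by linarith
    have hm₀pos : 0 < m₀ := Int.ceil_pos.2 (Real.logb_pos one_lt_two h34)
    set k := m₀.toNat with hkdef
    have hkm : (k : ℤ) = m₀ := Int.toNat_of_nonneg hm₀pos.le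
    have h2k : 25 * Real.sqrt n ≤ (2:ℝ)^k := by
      have h1 : (34:ℝ) * Real.sqrt n = (2:ℝ) ^ (Real.logb 2 (34*Real.sqrt n)) :=
        (Real.rpow_logb (by norm_num) (by norm_num) (by linarith)).symm
      have h2 : (2:ℝ) ^ (Real.logb 2 (34*Real.sqrt n)) ≤ (2:ℝ) ^ ((m₀:ℝ)) :=
        Real.rpow_le_rpow_of_exponent_le one_le_two (Int.le_ceil _)
      have h3 : ((m₀:ℝ)) = ((k:ℕ):ℝ) := by exact_mod_cast hkm.symm
      have h4 : (2:ℝ) ^ ((k:ℕ):ℝ) = (2:ℝ)^k := Real.rpow_natCast 2 k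
      have h5 : 25 * Real.sqrt n ≤ 34 * Real.sqrt n := by linarith
      calc 25 * Real.sqrt n ≤ 34 * Real.sqrt n := h5
        _ = (2:ℝ) ^ (Real.logb 2 (34*Real.sqrt n)) := h1
        _ ≤ (2:ℝ) ^ ((m₀:ℝ)) := h2
        _ = (2:ℝ)^k := by rw [h3, h4]
    set Shell : ℕ → Set (EuclideanSpace ℝ (Fin n)) := fun j =>
      {x | ENNReal.ofReal (((1:ℝ)/2)^j/2) ≤ EMetric.infEdist x K ∧
           EMetric.infEdist x K < ENNReal.ofReal (((1:ℝ)/2)^j)} with hShell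
    have hεj : ∀ j < N, ε ≤ ((1:ℝ)/2)^j := by
      intro j hj
      have hj1 : (j:ℝ) + 1 ≤ (N:ℝ) := by exact_mod_cast Nat.succ_le_of_lt hj
      have hNL : ((N:ℝ)) < L + 1 := Nat.ceil_lt_add_one hLpos.le
      have hjL : (j:ℝ) < L := by linarith
      have h2j : (2:ℝ)^((j:ℕ):ℝ) < (2:ℝ)^L :=
        Real.rpow_lt_rpow_of_exponent_lt one_lt_two hjL
      rw [hLdef, Real.rpow_logb (by norm_num) (by norm_num) (by positivity),
        Real.rpow_natCast] at h2j
      have hmul : ε * (2:ℝ)^j < 1 := by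
        have := mul_lt_mul_of_pos_left h2j hε
        rw [mul_one_div, div_self hε.ne'] at this
        linarith
      rw [div_pow, one_pow, le_div_iff₀ (by positivity)]
      linarith
    have hshell : ∀ j < N,
        μ {x | x ∉ K ∧ EMetric.infEdist x K < ENNReal.ofReal ε} ≤
          (ENNReal.ofReal δ)^k * μ (Shell j) := by
      intro j hj
      exact Aux.shell_bound hdbl hK hn (t := ((1:ℝ)/2)^j) (by positivity) hε
        (hεj j hj) h2k
    have hmeas : ∀ j, MeasurableSet (Shell j) := by
      intro j
      have hc : Measurable fun x : EuclideanSpace ℝ (Fin n) => EMetric.infEdist x K :=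
        EMetric.continuous_infEdist.measurable
      have : Shell j = {x | ENNReal.ofReal (((1:ℝ)/2)^j/2) ≤ EMetric.infEdist x K} ∩
          {x | EMetric.infEdist x K < ENNReal.ofReal (((1:ℝ)/2)^j)} := by
        ext x; simp [hShell, Set.mem_setOf_eq, Set.mem_inter_iff]
      rw [this]
      exact (measurableSet_le measurable_const hc).inter (measurableSet_lt hc measurable_const)
    have hdisjS : (↑(Finset.range N) : Set ℕ).PairwiseDisjoint Shell := by
      have key : ∀ {a b : ℕ}, a < b → Disjoint (Shell a) (Shell b) := by
        intro a b hab
        rw [Set.disjoint_left]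
        intro z hza hzb
        have h1 : ENNReal.ofReal (((1:ℝ)/2)^a/2) ≤ EMetric.infEdist z K := hza.1
        have h2 : EMetric.infEdist z K < ENNReal.ofReal (((1:ℝ)/2)^b) := hzb.2
        have hle : ((1:ℝ)/2)^b ≤ ((1:ℝ)/2)^a/2 := by
          have hb : ((1:ℝ)/2)^b ≤ ((1:ℝ)/2)^(a+1) :=
            pow_le_pow_of_le_one (by norm_num) (by norm_num) (Nat.succ_le_of_lt hab)
          calc ((1:ℝ)/2)^b ≤ ((1:ℝ)/2)^(a+1) := hb
            _ = ((1:ℝ)/2)^a/2 := by rw [pow_succ]; ring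
        exact absurd (h1.trans_lt (h2.trans_le (ENNReal.ofReal_le_ofReal hle)))
          (lt_irrefl _)
      intro a ha b hb hne
      rcases hne.lt_or_gt with hlt | hlt
      · exact key hlt
      · exact (key hlt).symm
    have hsum : (N:ℝ≥0∞) * μ {x | x ∉ K ∧ EMetric.infEdist x K < ENNReal.ofReal ε} ≤
        (ENNReal.ofReal δ)^k * μ (⋃ j ∈ Finset.range N, Shell j) := by
      have h1 : ∑ _j ∈ Finset.range N,
          μ {x | x ∉ K ∧ EMetric.infEdist x K < ENNReal.ofReal ε} ≤
          ∑ j ∈ Finset.range N, (ENNReal.ofReal δ)^k * μ (Shell j) :=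
        Finset.sum_le_sum (fun j hj => hshell j (Finset.mem_range.1 hj))
      rw [Finset.sum_const, Finset.card_range, ← Finset.mul_sum, nsmul_eq_mul] at h1
      rw [measure_biUnion_finset hdisjS (fun j _ => hmeas j)]
      exact h1
    set chalf : EuclideanSpace ℝ (Fin n) :=
      (WithLp.equiv 2 (Fin n → ℝ)).symm (fun _ => (1:ℝ)/2) with hchalf
    have hchalfi : ∀ i, chalf i = 1/2 := fun i => rfl
    have hbigsub : (⋃ j ∈ Finset.range N, Shell j) ⊆ Aux.cube chalf 2 := by
      intro x hx
      simp only [Set.mem_iUnion] at hx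
      obtain ⟨j, _, hxj⟩ := hx
      have hlt1 : EMetric.infEdist x K < ENNReal.ofReal 1 :=
        hxj.2.trans_le (ENNReal.ofReal_le_ofReal
          (pow_le_one₀ (by norm_num) (by norm_num)))
      obtain ⟨w, hwK, hw⟩ := EMetric.infEdist_lt_iff.1 hlt1
      have hdw : dist x w < 1 := by
        rw [edist_dist] at hw
        exact (ENNReal.ofReal_lt_ofReal_iff_of_nonneg dist_nonneg).1 hw
      intro i
      have hco := Aux.abs_coord_le_dist x w i
      have hwi := hKQ hwK i
      simp only [Set.mem_Icc] at hwi
      have := abs_lt.1 (hco.trans_lt hdw)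
      rw [hchalfi i]
      constructor <;> [linarith [this.1, hwi.1]; linarith [this.2, hwi.2]]
    have hQsub : Aux.cube chalf (1/2) ⊆ {x : EuclideanSpace ℝ (Fin n) |
        ∀ i, x i ∈ Set.Icc (0:ℝ) 1} := by
      intro x hx i
      have := hx i
      rw [hchalfi i] at this
      simp only [Set.mem_Ioo] at this
      exact ⟨by linarith [this.1], by linarith [this.2]⟩
    have hbig : μ (⋃ j ∈ Finset.range N, Shell j) ≤
        (ENNReal.ofReal δ)^2 * μ {x : EuclideanSpace ℝ (Fin n) |
          ∀ i, x i ∈ Set.Icc (0:ℝ) 1} := by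
      calc μ (⋃ j ∈ Finset.range N, Shell j) ≤ μ (Aux.cube chalf (2^2 * (1/2))) := by
            apply measure_mono
            have e : (2:ℝ)^2 * (1/2) = 2 := by norm_num
            rw [e]
            exact hbigsub
        _ ≤ (ENNReal.ofReal δ)^2 * μ (Aux.cube chalf (1/2)) :=
            Aux.iterate_measure hdbl _ (by norm_num) 2
        _ ≤ _ := mul_le_mul_right (measure_mono hQsub) _
    have htot : (N:ℝ≥0∞) * μ {x | x ∉ K ∧ EMetric.infEdist x K < ENNReal.ofReal ε} ≤
        (ENNReal.ofReal δ)^(k+2) * μ {x : EuclideanSpace ℝ (Fin n) |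
          ∀ i, x i ∈ Set.Icc (0:ℝ) 1} := by
      refine hsum.trans ?_
      calc (ENNReal.ofReal δ)^k * μ (⋃ j ∈ Finset.range N, Shell j)
          ≤ (ENNReal.ofReal δ)^k * ((ENNReal.ofReal δ)^2 *
            μ {x : EuclideanSpace ℝ (Fin n) | ∀ i, x i ∈ Set.Icc (0:ℝ) 1}) :=
            mul_le_mul_right hbig _
        _ = _ := by rw [← mul_assoc, ← pow_add]
    have hNne : (N:ℝ≥0∞) ≠ 0 := Nat.cast_ne_zero.2 hNpos.ne'
    have hNnt : (N:ℝ≥0∞) ≠ ⊤ := ENNReal.natCast_ne_top N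
    have hstep : μ {x | x ∉ K ∧ EMetric.infEdist x K < ENNReal.ofReal ε} ≤
        (N:ℝ≥0∞)⁻¹ * ((ENNReal.ofReal δ)^(k+2) * μ {x : EuclideanSpace ℝ (Fin n) |
          ∀ i, x i ∈ Set.Icc (0:ℝ) 1}) := by
      have := mul_le_mul_right htot ((N:ℝ≥0∞)⁻¹)
      rwa [← mul_assoc, ENNReal.inv_mul_cancel hNne hNnt, one_mul] at this
    refine hstep.trans ?_
    have hδ0 : (0:ℝ) < δ := by linarith
    suffices hc : (N:ℝ≥0∞)⁻¹ * (ENNReal.ofReal δ)^(k+2) ≤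
        ENNReal.ofReal (9 * δ ^ ((4:ℤ) + ⌈Real.logb 2 (34 * Real.sqrt n)⌉) *
          (Real.logb 2 (1 / ε))⁻¹) by
      calc (N:ℝ≥0∞)⁻¹ * ((ENNReal.ofReal δ)^(k+2) * μ _)
          = ((N:ℝ≥0∞)⁻¹ * (ENNReal.ofReal δ)^(k+2)) * μ _ := by rw [mul_assoc]
        _ ≤ _ := mul_le_mul_left hc _
    have e1 : (ENNReal.ofReal δ)^(k+2) = ENNReal.ofReal (δ^(k+2)) :=
      (ENNReal.ofReal_pow hδ0.le _).symm
    have e2 : (N:ℝ≥0∞)⁻¹ ≤ ENNReal.ofReal L⁻¹ := by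
      rw [ENNReal.ofReal_inv_of_pos hLpos]
      rw [ENNReal.inv_le_inv]
      calc ENNReal.ofReal L ≤ ENNReal.ofReal (N:ℝ) :=
            ENNReal.ofReal_le_ofReal (Nat.le_ceil L)
        _ = (N:ℝ≥0∞) := ENNReal.ofReal_natCast N
    have hreal : L⁻¹ * δ^(k+2) ≤ 9 * δ ^ ((4:ℤ) + m₀) * L⁻¹ := by
      have hz : δ ^ ((4:ℤ) + m₀) = δ ^ (k+4) := by
        rw [show (4:ℤ) + m₀ = ((k+4 : ℕ) : ℤ) by omega, zpow_natCast]
      rw [hz]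
      have hδ1 : (1:ℝ) ≤ δ := hδ.le
      have hp : δ^(k+2) ≤ δ^(k+4) := pow_le_pow_right₀ hδ1 (by omega)
      have hLinv : (0:ℝ) ≤ L⁻¹ := by positivity
      have h1 : L⁻¹ * δ^(k+2) ≤ L⁻¹ * δ^(k+4) := mul_le_mul_of_nonneg_left hp hLinv
      have h2 : (0:ℝ) ≤ L⁻¹ * δ^(k+4) := mul_nonneg hLinv (pow_nonneg hδ0.le _)
      nlinarith
    calc (N:ℝ≥0∞)⁻¹ * (ENNReal.ofReal δ)^(k+2)
        ≤ ENNReal.ofReal L⁻¹ * ENNReal.ofReal (δ^(k+2)) := by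
          rw [e1]; exact mul_le_mul_left e2 _
      _ = ENNReal.ofReal (L⁻¹ * δ^(k+2)) :=
          (ENNReal.ofReal_mul (by positivity)).symm
      _ ≤ ENNReal.ofReal (9 * δ ^ ((4:ℤ) + m₀) * (Real.logb 2 (1 / ε))⁻¹) := by
          apply ENNReal.ofReal_le_ofReal
          rw [hLdef] at hreal ⊢
          exact hreal
      _ = _ := by rw [hm₀def]
end
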